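/- arXiv:1507.00691 — 7 statements merged into one kernel-verified Lean document; each statement's English description precedes it below -/
import Mathlib

section
/- (Energy-difference identity.) For every adoption vector x ∈ {0,1}^V, E(x) − E(F(x)) = ⟨F²(x) − x, A·F(x) − β⟩, where the inner product is the standard inner product on ℝ^V and vectors in {0,1}^V are regarded as real vectors. (The identity uses the symmetry of the adjacency matrix A.) -/
open Finset

/-- The threshold update map: node `i` adopts Behavior 1 iff the number of its
neighbors currently adopting Behavior 1 is at least its threshold `b i`. -/
def thrUpd {V : Type*} [Fintype V] [DecidableEq V] (G : SimpleGraph V) [DecidableRel G.Adj]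
    (b : V → ℤ) (x : V → Bool) : V → Bool :=
  fun i => decide (b i ≤ ∑ j ∈ G.neighborFinset i, (if x j then (1 : ℤ) else 0))

/-- An adoption vector regarded as a rational vector. -/
def toQ {V : Type*} (x : V → Bool) : V → ℚ := fun i => if x i then 1 else 0

/-- The half-integer thresholds `β i = b i - 1/2`. -/
def halfThr {V : Type*} (b : V → ℤ) : V → ℚ := fun i => (b i : ℚ) - 1/2

/-- The adjacency matrix of `G` applied to (the rational version of) an adoption
vector: `(A·x) i = ∑_{j ∈ δ(i)} x j`. -/
def Avec {V : Type*} [Fintype V] [DecidableEq V] (G : SimpleGraph V) [DecidableRel G.Adj]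
    (x : V → Bool) : V → ℚ :=
  fun i => ∑ j ∈ G.neighborFinset i, toQ x j

/-- The energy `E(x) = ⟨β, x⟩ − ⟨A·x − β, F(x)⟩`. -/
def energy {V : Type*} [Fintype V] [DecidableEq V] (G : SimpleGraph V) [DecidableRel G.Adj]
    (b : V → ℤ) (x : V → Bool) : ℚ :=
  (∑ i, halfThr b i * toQ x i) - ∑ i, (Avec G x i - halfThr b i) * toQ (thrUpd G b x) i

/-- Energy-difference identity: `E(x) − E(F(x)) = ⟨F²(x) − x, A·F(x) − β⟩`. -/
theorem energy_difference_identity {V : Type*} [Fintype V] [DecidableEq V]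
    (G : SimpleGraph V) [DecidableRel G.Adj] (b : V → ℤ) (x : V → Bool) :
    energy G b x - energy G b (thrUpd G b x)
      = ∑ i, (toQ ((thrUpd G b)^[2] x) i - toQ x i) *
          (Avec G (thrUpd G b x) i - halfThr b i) := by
  have hz : (thrUpd G b)^[2] x = thrUpd G b (thrUpd G b x) := rfl
  rw [hz]
  set y := thrUpd G b x with hy
  set z := thrUpd G b y with hzy
  have h1 : ∀ (f : V → V → ℚ),
      ∑ i, ∑ j ∈ G.neighborFinset i, f i j
        = ∑ i, ∑ j, if G.Adj i j then f i j else 0 := by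
    intro f
    refine Finset.sum_congr rfl fun i _ => ?_
    rw [SimpleGraph.neighborFinset_eq_filter, Finset.sum_filter]
  have key : ∑ i, Avec G x i * toQ y i = ∑ i, toQ x i * Avec G y i := by
    simp only [Avec, Finset.sum_mul, Finset.mul_sum]
    rw [h1, h1, Finset.sum_comm]
    refine Finset.sum_congr rfl fun i _ => Finset.sum_congr rfl fun j _ => ?_
    exact if_congr (G.adj_comm j i) rfl rfl
  rw [energy, energy, ← Finset.sum_sub_distrib, ← Finset.sum_sub_distrib,
    ← Finset.sum_sub_distrib, ← sub_eq_zero, ← Finset.sum_sub_distrib]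
  calc ∑ i, (halfThr b i * toQ x i - (Avec G x i - halfThr b i) * toQ y i -
        (halfThr b i * toQ y i - (Avec G y i - halfThr b i) * toQ z i) -
        (toQ z i - toQ x i) * (Avec G y i - halfThr b i))
      = ∑ i, (toQ x i * Avec G y i - Avec G x i * toQ y i) :=
        Finset.sum_congr rfl fun i _ => by ring
    _ = 0 := by rw [Finset.sum_sub_distrib, ← key, sub_self]
end

section
/- (Energy decreases unless in a 2-cycle.) For every adoption vector x ∈ {0,1}^V with F²(x) ≠ x, one has E(F(x)) + 1/2 ≤ E(x). -/
open Finset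

lemma avec_symm {V : Type*} [Fintype V] [DecidableEq V] (G : SimpleGraph V) [DecidableRel G.Adj]
    (x y : V → Bool) :
    ∑ i, Avec G x i * toQ y i = ∑ i, Avec G y i * toQ x i := by
  unfold Avec
  simp only [Finset.sum_mul, SimpleGraph.neighborFinset_eq_filter, Finset.sum_filter]
  rw [Finset.sum_comm]
  refine Finset.sum_congr rfl fun j _ => Finset.sum_congr rfl fun i _ => ?_
  by_cases hij : G.Adj i j
  · simp [hij, hij.symm, mul_comm]
  · have h2 : ¬ G.Adj j i := fun hh => hij hh.symm
    simp [hij, h2]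

lemma avec_int {V : Type*} [Fintype V] [DecidableEq V] (G : SimpleGraph V) [DecidableRel G.Adj]
    (y : V → Bool) (i : V) :
    Avec G y i = ((∑ j ∈ G.neighborFinset i, (if y j then (1 : ℤ) else 0) : ℤ) : ℚ) := by
  unfold Avec toQ
  push_cast
  refine Finset.sum_congr rfl fun j _ => ?_
  by_cases hj : y j <;> simp [hj]

lemma term_nonneg {V : Type*} [Fintype V] [DecidableEq V] (G : SimpleGraph V) [DecidableRel G.Adj]
    (b : V → ℤ) (y x : V → Bool) (i : V) :
    0 ≤ (Avec G y i - halfThr b i) * (toQ (thrUpd G b y) i - toQ x i) := by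
  rw [avec_int]
  set n := ∑ j ∈ G.neighborFinset i, (if y j then (1 : ℤ) else 0) with hn
  have hz : thrUpd G b y i = decide (b i ≤ n) := rfl
  unfold toQ halfThr
  rw [hz]
  by_cases hb : b i ≤ n
  · have : (b i : ℚ) ≤ (n : ℚ) := by exact_mod_cast hb
    by_cases hx : x i <;> simp [hb, hx] <;> linarith
  · have hlt : n ≤ b i - 1 := by omega
    have : (n : ℚ) ≤ (b i : ℚ) - 1 := by exact_mod_cast hlt
    by_cases hx : x i <;> simp [hb, hx] <;> linarith

lemma term_half {V : Type*} [Fintype V] [DecidableEq V] (G : SimpleGraph V) [DecidableRel G.Adj]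
    (b : V → ℤ) (y x : V → Bool) (i : V) (hne : thrUpd G b y i ≠ x i) :
    1/2 ≤ (Avec G y i - halfThr b i) * (toQ (thrUpd G b y) i - toQ x i) := by
  rw [avec_int]
  set n := ∑ j ∈ G.neighborFinset i, (if y j then (1 : ℤ) else 0) with hn
  have hz : thrUpd G b y i = decide (b i ≤ n) := rfl
  rw [hz] at hne
  unfold toQ halfThr
  rw [hz]
  by_cases hb : b i ≤ n
  · have : (b i : ℚ) ≤ (n : ℚ) := by exact_mod_cast hb
    have hx : x i = false := by simpa [hb] using hne
    simp [hb, hx]; linarith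
  · have hlt : n ≤ b i - 1 := by omega
    have : (n : ℚ) ≤ (b i : ℚ) - 1 := by exact_mod_cast hlt
    have hx : x i = true := by simpa [hb] using hne
    simp [hb, hx]; linarith

/-- Energy decreases unless in a 2-cycle: if `F²(x) ≠ x` then `E(F(x)) + 1/2 ≤ E(x)`. -/
theorem energy_decreases_unless_two_cycle {V : Type*} [Fintype V] [DecidableEq V]
    (G : SimpleGraph V) [DecidableRel G.Adj] (b : V → ℤ) (x : V → Bool)
    (h : (thrUpd G b)^[2] x ≠ x) :
    energy G b (thrUpd G b x) + 1/2 ≤ energy G b x := by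
  set y := thrUpd G b x with hy
  set z := thrUpd G b y with hzdef
  have hzx : z ≠ x := by
    simpa [Function.iterate_succ, Function.comp, hy, hzdef] using h
  obtain ⟨i₀, hi₀⟩ := Function.ne_iff.mp hzx
  have hid : energy G b x - energy G b y
      = ∑ i, (Avec G y i - halfThr b i) * (toQ z i - toQ x i) := by
    unfold energy
    rw [← hy, ← hzdef]
    have hsym := avec_symm G x y
    simp only [mul_sub, sub_mul, Finset.sum_sub_distrib]
    linarith [hsym]
  have hnn : ∀ i ∈ Finset.univ, 0 ≤ (Avec G y i - halfThr b i) * (toQ z i - toQ x i) :=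
    fun i _ => term_nonneg G b y x i
  have hsingle := Finset.single_le_sum hnn (Finset.mem_univ i₀)
  have hhalf := term_half G b y x i₀ hi₀
  linarith
end

section
/- (Every cycle of the threshold dynamics has length at most 2.) If x ∈ {0,1}^V is periodic under the threshold update map, i.e. F^c(x) = x for some integer c ≥ 1, then F²(x) = x. -/
open Finset

namespace GolesAux

variable {V : Type*} [Fintype V] [DecidableEq V] (G : SimpleGraph V) [DecidableRel G.Adj]
  (b : V → ℤ)

/-- integer value of a boolean state -/
def bv (x : V → Bool) (i : V) : ℤ := if x i then 1 else 0

/-- shifted (odd, hence nonzero) local field -/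
def sg (y : V → Bool) (i : V) : ℤ :=
  (∑ j ∈ G.neighborFinset i, 2 * bv y j) - (2 * b i - 1)

lemma upd_true_iff (y : V → Bool) (i : V) :
    thrUpd G b y i = true ↔ 0 < sg G b y i := by
  simp only [thrUpd, sg, decide_eq_true_iff, bv]
  rw [show (∑ j ∈ G.neighborFinset i, 2 * (if y j = true then (1:ℤ) else 0))
      = 2 * ∑ j ∈ G.neighborFinset i, (if y j = true then (1:ℤ) else 0) from
    (Finset.mul_sum _ _ _).symm]
  constructor <;> (intro; omega)

lemma upd_false_iff (y : V → Bool) (i : V) :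
    thrUpd G b y i = false ↔ sg G b y i < 0 := by
  simp only [thrUpd, sg, decide_eq_false_iff_not, bv, not_le]
  rw [show (∑ j ∈ G.neighborFinset i, 2 * (if y j = true then (1:ℤ) else 0))
      = 2 * ∑ j ∈ G.neighborFinset i, (if y j = true then (1:ℤ) else 0) from
    (Finset.mul_sum _ _ _).symm]
  constructor <;> (intro; omega)

lemma pt_nonneg (y z : V → Bool) (i : V) :
    0 ≤ (bv (thrUpd G b y) i - bv z i) * sg G b y i := by
  rcases hu : thrUpd G b y i with _ | _
  · have := (upd_false_iff G b y i).mp hu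
    rcases hz : z i <;> simp [bv, hu, hz] <;> nlinarith
  · have := (upd_true_iff G b y i).mp hu
    rcases hz : z i <;> simp [bv, hu, hz] <;> nlinarith

lemma pt_eq_zero (y z : V → Bool) (i : V)
    (h : (bv (thrUpd G b y) i - bv z i) * sg G b y i = 0) :
    thrUpd G b y i = z i := by
  rcases hu : thrUpd G b y i with _ | _
  · have hs := (upd_false_iff G b y i).mp hu
    rcases hz : z i
    · rfl
    · exfalso; simp [bv, hu, hz] at h; omega
  · have hs := (upd_true_iff G b y i).mp hu
    rcases hz : z i
    · exfalso; simp [bv, hu, hz] at h; omega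
    · rfl

/-- energy -/
def en (a z : V → Bool) : ℤ :=
  (∑ i, (2 * b i - 1) * (bv a i + bv z i)) -
    ∑ i, ∑ j ∈ G.neighborFinset i, 2 * bv a i * bv z j

lemma en_symm (a z : V → Bool) : en G b a z = en G b z a := by
  have h1 : ∑ i, ∑ j ∈ G.neighborFinset i, 2 * bv a i * bv z j
      = ∑ i, ∑ j ∈ G.neighborFinset i, 2 * bv z i * bv a j := by
    simp only [SimpleGraph.neighborFinset_eq_filter, Finset.sum_filter]
    rw [Finset.sum_comm]
    refine Finset.sum_congr rfl fun i _ => Finset.sum_congr rfl fun j _ => ?_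
    by_cases hadj : G.Adj i j
    · rw [if_pos ((G.adj_comm j i).mpr hadj), if_pos hadj]; ring
    · rw [if_neg (fun hji => hadj ((G.adj_comm j i).mp hji)), if_neg hadj]
  have h2 : ∑ i, (2 * b i - 1) * (bv a i + bv z i)
      = ∑ i, (2 * b i - 1) * (bv z i + bv a i) := by
    refine Finset.sum_congr rfl fun i _ => by ring
  rw [en, en, h1, h2]

lemma en_step (y z : V → Bool) :
    en G b (thrUpd G b y) y - en G b z y
      = -∑ i, (bv (thrUpd G b y) i - bv z i) * sg G b y i := by
  have key : ∀ a : V → Bool, en G b a y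
      = ∑ i, ((2 * b i - 1) * (bv a i + bv y i)
          - bv a i * ∑ j ∈ G.neighborFinset i, 2 * bv y j) := by
    intro a
    rw [en, ← Finset.sum_sub_distrib]
    refine Finset.sum_congr rfl fun i _ => ?_
    congr 1
    rw [Finset.mul_sum]
    exact Finset.sum_congr rfl fun j _ => by ring
  rw [key, key, ← Finset.sum_sub_distrib, ← Finset.sum_neg_distrib]
  refine Finset.sum_congr rfl fun i _ => ?_
  rw [sg]
  ring

end GolesAux

set_option maxHeartbeats 1000000 in
/-- Every cycle of the threshold dynamics has length at most 2: if `F^c(x) = x` for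
some `c ≥ 1`, then `F²(x) = x`. -/
theorem cycles_have_length_at_most_two {V : Type*} [Fintype V] [DecidableEq V]
    (G : SimpleGraph V) [DecidableRel G.Adj] (b : V → ℤ) (x : V → Bool)
    (c : ℕ) (hc : 1 ≤ c) (h : (thrUpd G b)^[c] x = x) :
    (thrUpd G b)^[2] x = x := by
  classical
  open GolesAux in
  set F := thrUpd G b with hF
  -- energy sequence
  set g : ℕ → ℤ := fun t => GolesAux.en G b (F^[t+1] x) (F^[t] x) with hg
  have hstep : ∀ t, g (t+1) - g t
      = -∑ i, (GolesAux.bv (F^[t+2] x) i - GolesAux.bv (F^[t] x) i) *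
          GolesAux.sg G b (F^[t+1] x) i := by
    intro t
    have h1 : F^[t+2] x = F (F^[t+1] x) := by
      rw [show t + 2 = 1 + (t+1) from by ring, Function.iterate_add_apply,
        Function.iterate_one]
    have h2 : F^[t+1] x = F (F^[t] x) := by
      rw [show t + 1 = 1 + t from by ring, Function.iterate_add_apply,
        Function.iterate_one]
    calc g (t+1) - g t
        = GolesAux.en G b (F (F^[t+1] x)) (F^[t+1] x)
          - GolesAux.en G b (F^[t] x) (F^[t+1] x) := by
          rw [hg]; dsimp only; rw [← h1, GolesAux.en_symm G b (F^[t+1] x) (F^[t] x)]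
      _ = -∑ i, (GolesAux.bv (F (F^[t+1] x)) i - GolesAux.bv (F^[t] x) i) *
            GolesAux.sg G b (F^[t+1] x) i := GolesAux.en_step G b _ _
      _ = _ := by rw [← h1]
  have hmono : ∀ t, g (t+1) ≤ g t := by
    intro t
    have := hstep t
    have hnn : 0 ≤ ∑ i, (GolesAux.bv (F^[t+2] x) i - GolesAux.bv (F^[t] x) i) *
        GolesAux.sg G b (F^[t+1] x) i := by
      refine Finset.sum_nonneg fun i _ => ?_
      have h1 : F^[t+2] x = F (F^[t+1] x) := by
        rw [show t + 2 = 1 + (t+1) from by ring, Function.iterate_add_apply,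
          Function.iterate_one]
      rw [h1]
      exact GolesAux.pt_nonneg G b _ _ i
    linarith
  have hanti : Antitone g := antitone_nat_of_succ_le hmono
  have hgc : g c = g 0 := by
    simp only [hg]
    rw [show c + 1 = 1 + c from by ring, Function.iterate_add_apply, h,
      Function.iterate_one]
    simp
  have hg10 : g 1 = g 0 := le_antisymm (hmono 0) (hgc ▸ hanti (show 1 ≤ c from hc))
  have hzero : ∑ i, (GolesAux.bv (F^[2] x) i - GolesAux.bv (F^[0] x) i) *
      GolesAux.sg G b (F^[1] x) i = 0 := by
    have := hstep 0
    rw [hg10] at this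
    linarith
  have hterm : ∀ i ∈ Finset.univ, (GolesAux.bv (F^[2] x) i - GolesAux.bv (F^[0] x) i) *
      GolesAux.sg G b (F^[1] x) i = 0 := by
    rw [← Finset.sum_eq_zero_iff_of_nonneg]
    · exact hzero
    · intro i _
      have h1 : F^[2] x = F (F^[1] x) := by
        rw [show (2:ℕ) = 1 + 1 from rfl, Function.iterate_add_apply, Function.iterate_one]
      rw [h1]
      exact GolesAux.pt_nonneg G b _ _ i
  funext i
  have h1 : F^[2] x = F (F^[1] x) := by
    rw [show (2:ℕ) = 1 + 1 from rfl, Function.iterate_add_apply, Function.iterate_one]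
  have hti := hterm i (Finset.mem_univ i)
  rw [h1] at hti
  have h2 := GolesAux.pt_eq_zero G b (F^[1] x) (F^[0] x) i hti
  show F^[2] x i = x i
  rw [h1]
  simpa [hF] using h2
end

section
/- (One-coordinate two-step difference forces rapid 2-cycling.) Let x ∈ {0,1}^V be such that F²(x) differs from x in exactly one coordinate. Then there exists a time t ≤ 2|V| with F^{t+2}(x) = F^t(x); that is, the trajectory from x enters a cycle of length at most 2 within 2|V| time steps. -/
open Finset

lemma bool_true_le {a : Bool} (h : true ≤ a) : a = true := by
  cases a
  · exact absurd h (by decide)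
  · rfl

lemma bool_le_false {a : Bool} (h : a ≤ false) : a = false := by
  cases a
  · rfl
  · exact absurd h (by decide)

lemma thrUpd_mono {V : Type*} [Fintype V] [DecidableEq V] (G : SimpleGraph V)
    [DecidableRel G.Adj] (b : V → ℤ) : Monotone (thrUpd G b) := by
  intro x y hxy i
  simp only [thrUpd]
  have hs : (∑ j ∈ G.neighborFinset i, (if x j then (1:ℤ) else 0))
      ≤ ∑ j ∈ G.neighborFinset i, (if y j then (1:ℤ) else 0) := by
    apply Finset.sum_le_sum
    intro j _
    have hj := hxy j
    cases hx : x j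
    · cases hy : y j <;> simp
    · rw [hx] at hj
      rw [bool_true_le hj]
  cases hP : decide (b i ≤ ∑ j ∈ G.neighborFinset i, (if x j then (1:ℤ) else 0))
  · exact Bool.false_le _
  · have h1 : b i ≤ ∑ j ∈ G.neighborFinset i, (if x j then (1:ℤ) else 0) :=
      of_decide_eq_true hP
    exact le_of_eq (decide_eq_true (le_trans h1 hs)).symm

lemma exists_fix_of_le {V : Type*} [Fintype V] [DecidableEq V]
    (f : (V → Bool) → (V → Bool)) (hf : Monotone f) (x : V → Bool) (hx : x ≤ f x) :
    ∃ k ≤ Fintype.card V, f^[k+1] x = f^[k] x := by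
  by_contra hcon
  push_neg at hcon
  have chain : ∀ k, f^[k] x ≤ f^[k+1] x := by
    intro k
    induction k with
    | zero => simpa using hx
    | succ n ih => simpa only [← Function.iterate_succ_apply'] using hf ih
  have card_lt : ∀ k ≤ Fintype.card V,
      (univ.filter fun i => f^[k] x i = true).card
        < (univ.filter fun i => f^[k+1] x i = true).card := by
    intro k hk
    apply Finset.card_lt_card
    constructor
    · intro i hi
      simp only [mem_filter, mem_univ, true_and] at hi ⊢
      have h1 := chain k i
      rw [hi] at h1
      exact bool_true_le h1
    · intro hsub
      apply hcon k hk
      funext i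
      show f^[k+1] x i = f^[k] x i
      have h1 := chain k i
      cases h3 : f^[k+1] x i
      · rw [h3] at h1
        exact (bool_le_false h1).symm
      · have hm : i ∈ univ.filter fun i => f^[k+1] x i = true := by
          simp only [mem_filter, mem_univ, true_and]; exact h3
        have hm2 := hsub hm
        simp only [mem_filter, mem_univ, true_and] at hm2
        exact hm2.symm
  have grow : ∀ k ≤ Fintype.card V + 1,
      k ≤ (univ.filter fun i => f^[k] x i = true).card := by
    intro k
    induction k with
    | zero => intro _; exact Nat.zero_le _
    | succ n ih =>
        intro hn
        have h1 := ih (by omega)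
        have h2 := card_lt n (by omega)
        omega
  have h1 := grow (Fintype.card V + 1) le_rfl
  have h2 : (univ.filter fun i => f^[Fintype.card V + 1] x i = true).card ≤ Fintype.card V := by
    simpa using Finset.card_filter_le univ fun i => f^[Fintype.card V + 1] x i = true
  omega

lemma exists_fix_of_ge {V : Type*} [Fintype V] [DecidableEq V]
    (f : (V → Bool) → (V → Bool)) (hf : Monotone f) (x : V → Bool) (hx : f x ≤ x) :
    ∃ k ≤ Fintype.card V, f^[k+1] x = f^[k] x := by
  by_contra hcon
  push_neg at hcon
  have chain : ∀ k, f^[k+1] x ≤ f^[k] x := by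
    intro k
    induction k with
    | zero => simpa using hx
    | succ n ih => simpa only [← Function.iterate_succ_apply'] using hf ih
  have card_lt : ∀ k ≤ Fintype.card V,
      (univ.filter fun i => f^[k] x i = false).card
        < (univ.filter fun i => f^[k+1] x i = false).card := by
    intro k hk
    apply Finset.card_lt_card
    constructor
    · intro i hi
      simp only [mem_filter, mem_univ, true_and] at hi ⊢
      have h1 := chain k i
      rw [hi] at h1
      exact bool_le_false h1
    · intro hsub
      apply hcon k hk
      funext i
      show f^[k+1] x i = f^[k] x i
      have h1 := chain k i
      cases h3 : f^[k+1] x i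
      · have hm : i ∈ univ.filter fun i => f^[k+1] x i = false := by
          simp only [mem_filter, mem_univ, true_and]; exact h3
        have hm2 := hsub hm
        simp only [mem_filter, mem_univ, true_and] at hm2
        exact hm2.symm
      · rw [h3] at h1
        exact (bool_true_le h1).symm
  have grow : ∀ k ≤ Fintype.card V + 1,
      k ≤ (univ.filter fun i => f^[k] x i = false).card := by
    intro k
    induction k with
    | zero => intro _; exact Nat.zero_le _
    | succ n ih =>
        intro hn
        have h1 := ih (by omega)
        have h2 := card_lt n (by omega)
        omega
  have h1 := grow (Fintype.card V + 1) le_rfl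
  have h2 : (univ.filter fun i => f^[Fintype.card V + 1] x i = false).card ≤ Fintype.card V := by
    simpa using Finset.card_filter_le univ fun i => f^[Fintype.card V + 1] x i = false
  omega

/-- One-coordinate two-step difference forces rapid 2-cycling: if `F²(x)` differs
from `x` in exactly one coordinate, then the trajectory from `x` enters a cycle of
length at most 2 within `2|V|` time steps. -/
theorem one_coordinate_difference_forces_rapid_two_cycle {V : Type*} [Fintype V]
    [DecidableEq V] (G : SimpleGraph V) [DecidableRel G.Adj] (b : V → ℤ) (x : V → Bool)
    (h : (Finset.univ.filter fun i => (thrUpd G b)^[2] x i ≠ x i).card = 1) :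
    ∃ t ≤ 2 * Fintype.card V, (thrUpd G b)^[t + 2] x = (thrUpd G b)^[t] x := by
  set g := (thrUpd G b)^[2] with hg
  have hgm : Monotone g := (thrUpd_mono G b).iterate 2
  obtain ⟨i0, hi0⟩ := Finset.card_eq_one.mp h
  have hother : ∀ j, j ≠ i0 → g x j = x j := by
    intro j hj
    by_contra hne
    have hmem : j ∈ Finset.univ.filter fun i => (thrUpd G b)^[2] x i ≠ x i := by
      simp only [mem_filter, mem_univ, true_and]
      exact hne
    rw [hi0] at hmem
    simp only [Finset.mem_singleton] at hmem
    exact hj hmem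
  have hcomp : x ≤ g x ∨ g x ≤ x := by
    cases hx0 : x i0
    · left
      intro j
      by_cases hj : j = i0
      · subst hj; rw [hx0]; exact Bool.false_le _
      · rw [hother j hj]
    · right
      intro j
      by_cases hj : j = i0
      · subst hj; rw [hx0]; exact Bool.le_true _
      · rw [hother j hj]
  have key : ∃ k ≤ Fintype.card V, g^[k+1] x = g^[k] x := by
    rcases hcomp with hc | hc
    · exact exists_fix_of_le g hgm x hc
    · exact exists_fix_of_ge g hgm x hc
  obtain ⟨k, hk, hfix⟩ := key
  refine ⟨2 * k, by omega, ?_⟩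
  have e1 : (thrUpd G b)^[2 * k + 2] x = g^[k+1] x := by
    rw [show 2 * k + 2 = 2 * (k + 1) by ring, hg, Function.iterate_mul]
  have e2 : (thrUpd G b)^[2 * k] x = g^[k] x := by
    rw [hg, Function.iterate_mul]
  rw [e1, e2, hfix]
end

section
/- (Main convergence bound for reversible threshold spread.) For every initial adoption vector x(0) ∈ {0,1}^V, within 2|E| + |V| time steps the trajectory x(t) := F^t(x(0)) converges to a cycle of length at most 2: there exists t ≤ 2|E| + |V| with x(t+2) = x(t), and hence x(s+2) = x(s) for all s ≥ t. -/
open Finset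

set_option linter.unusedSectionVars false
set_option linter.unusedVariables false


namespace ThrProof

variable {V : Type*} [Fintype V] [DecidableEq V] (G : SimpleGraph V) [DecidableRel G.Adj]
  (b : V → ℤ)

/-- 0/1 integer indicator of a Bool. -/
def bi (x : Bool) : ℤ := if x then 1 else 0

lemma bi_nonneg (x : Bool) : 0 ≤ bi x := by cases x <;> simp [bi]
lemma bi_le_one (x : Bool) : bi x ≤ 1 := by cases x <;> simp [bi]

/-- # of active neighbors, as an integer. -/
def sN (x : V → Bool) (i : V) : ℤ := ∑ j ∈ G.neighborFinset i, bi (x j)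

lemma sN_nonneg (x : V → Bool) (i : V) : 0 ≤ sN G x i :=
  Finset.sum_nonneg fun j _ => bi_nonneg _

lemma sN_le_deg (x : V → Bool) (i : V) : sN G x i ≤ (G.degree i : ℤ) := by
  have h : sN G x i ≤ ∑ _j ∈ G.neighborFinset i, (1 : ℤ) :=
    Finset.sum_le_sum fun j _ => bi_le_one (x j)
  simpa [Finset.sum_const, G.card_neighborFinset_eq_degree i] using h

lemma sN_mono {x y : V → Bool} (h : ∀ j, x j = true → y j = true) (i : V) :
    sN G x i ≤ sN G y i := by
  refine Finset.sum_le_sum fun j _ => ?_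
  cases hx : x j
  · exact le_trans (by simp [bi]) (bi_nonneg (y j))
  · rw [h j hx]

/-- clamped threshold -/
def bt (i : V) : ℤ := max 0 (min (b i) ((G.degree i : ℤ) + 1))

lemma bt_nonneg (i : V) : 0 ≤ bt G b i := le_max_left _ _
lemma bt_le (i : V) : bt G b i ≤ (G.degree i : ℤ) + 1 := by
  have : (0:ℤ) ≤ (G.degree i : ℤ) + 1 := by positivity
  unfold bt; omega

lemma thr_iff (x : V → Bool) (i : V) :
    thrUpd G b x i = true ↔ b i ≤ sN G x i := by
  simp [thrUpd, sN, bi]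

lemma thr_iff_bt (x : V → Bool) (i : V) :
    thrUpd G b x i = true ↔ bt G b i ≤ sN G x i := by
  rw [thr_iff]
  have h1 := sN_nonneg G x i
  have h2 := sN_le_deg G x i
  unfold bt; omega

lemma thr_false_bt {x : V → Bool} {i : V} (h : thrUpd G b x i = false) :
    sN G x i ≤ bt G b i - 1 := by
  have := thr_iff_bt G b x i
  have h2 : ¬ (bt G b i ≤ sN G x i) := by
    rw [← this]; simp [h]
  omega

lemma thr_mono {x y : V → Bool} (h : ∀ j, x j = true → y j = true) :
    ∀ j, thrUpd G b x j = true → thrUpd G b y j = true := by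
  intro j hj
  rw [thr_iff] at hj ⊢
  exact le_trans hj (sN_mono G h j)

lemma iter_mono {x y : V → Bool} (h : ∀ j, x j = true → y j = true) (k : ℕ) :
    ∀ j, (thrUpd G b)^[k] x j = true → (thrUpd G b)^[k] y j = true := by
  induction k with
  | zero => simpa using h
  | succ k ih =>
    rw [Function.iterate_succ_apply', Function.iterate_succ_apply']
    exact thr_mono G b ih

/-- the Lyapunov summand of vertex i. -/
def Wv (x y : V → Bool) (i : V) : ℤ :=
  -2 * bi (y i) * sN G x i + (2 * bt G b i - 1) * (bi (x i) + bi (y i))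

def W (x y : V → Bool) : ℤ := ∑ i, Wv G b x y i

lemma swap_sum (x y : V → Bool) :
    ∑ i, bi (y i) * sN G x i = ∑ i, bi (x i) * sN G y i := by
  have key : ∀ u v : V → Bool,
      ∑ i, bi (u i) * sN G v i
        = ∑ i, ∑ j, (if G.Adj i j then bi (u i) * bi (v j) else 0) := by
    intro u v
    refine Finset.sum_congr rfl fun i _ => ?_
    rw [sN, Finset.mul_sum]
    rw [show G.neighborFinset i = Finset.univ.filter (fun j => G.Adj i j) by
      ext j; simp [SimpleGraph.mem_neighborFinset]]
    rw [Finset.sum_filter]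
  rw [key, key, Finset.sum_comm]
  refine Finset.sum_congr rfl fun i _ => Finset.sum_congr rfl fun j _ => ?_
  by_cases h : G.Adj i j
  · rw [if_pos h, if_pos (G.adj_symm h), mul_comm]
  · rw [if_neg h, if_neg (fun h' => h (G.adj_symm h'))]

/-- Drop identity. -/
lemma drop_eq (x y z : V → Bool) :
    W G b x y - W G b y z
      = ∑ i, (bi (z i) - bi (x i)) * (2 * sN G y i - (2 * bt G b i - 1)) := by
  have e1 : ∀ u v : V → Bool, W G b u v
      = -2 * (∑ i, bi (v i) * sN G u i) + ∑ i, (2 * bt G b i - 1) * (bi (u i) + bi (v i)) := by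
    intro u v
    rw [W, Finset.mul_sum, ← Finset.sum_add_distrib]
    refine Finset.sum_congr rfl fun i _ => ?_
    rw [Wv]; ring
  rw [e1, e1]
  have e2 : ∑ i, (bi (z i) - bi (x i)) * (2 * sN G y i - (2 * bt G b i - 1))
      = (2 * (∑ i, bi (z i) * sN G y i) - 2 * (∑ i, bi (x i) * sN G y i))
        + (∑ i, (2 * bt G b i - 1) * (bi (x i) + bi (y i))
            - ∑ i, (2 * bt G b i - 1) * (bi (y i) + bi (z i))) := by
    rw [Finset.mul_sum, Finset.mul_sum, ← Finset.sum_sub_distrib, ← Finset.sum_sub_distrib,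
      ← Finset.sum_add_distrib]
    refine Finset.sum_congr rfl fun i _ => ?_
    ring
  rw [e2, ← swap_sum G x y]
  ring

lemma thr_true_bt {x : V → Bool} {i : V} (h : thrUpd G b x i = true) :
    bt G b i ≤ sN G x i := by
  have h1 := sN_nonneg G x i
  have h2 := sN_le_deg G x i
  have := (show thrUpd G b x i = true ↔ b i ≤ sN G x i by simp [thrUpd, sN, bi]).mp h
  unfold bt; omega

lemma thr_false_bt' {x : V → Bool} {i : V} (h : thrUpd G b x i = false) :
    sN G x i ≤ bt G b i - 1 := by
  have h1 := sN_nonneg G x i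
  have h2 := sN_le_deg G x i
  have h3 : ¬ (b i ≤ sN G x i) := by
    intro hc
    have := (show thrUpd G b x i = true ↔ b i ≤ sN G x i by simp [thrUpd, sN, bi]).mpr hc
    rw [h] at this; exact Bool.false_ne_true this
  unfold bt; omega

/-- per-vertex drop term. -/
def Dv (x y z : V → Bool) (i : V) : ℤ :=
  (bi (z i) - bi (x i)) * (2 * sN G y i - (2 * bt G b i - 1))

lemma Dv_zero {x z : V → Bool} (y : V → Bool) {i : V} (h : z i = x i) :
    Dv G b x y z i = 0 := by
  rw [Dv, h]; ring

lemma Dv_one {x y z : V → Bool} (hz : z = thrUpd G b y) {i : V} (h : z i ≠ x i) :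
    1 ≤ Dv G b x y z i := by
  rw [Dv]
  cases hzi : z i
  · cases hxi : x i
    · exact absurd (hzi.trans hxi.symm) h
    · have hs : sN G y i ≤ bt G b i - 1 := thr_false_bt' G b (hz ▸ hzi)
      simp only [hzi, hxi, bi]; norm_num
      linarith
  · cases hxi : x i
    · have hs : bt G b i ≤ sN G y i := thr_true_bt G b (hz ▸ hzi)
      simp only [hzi, hxi, bi]; norm_num
      linarith
    · exact absurd (hzi.trans hxi.symm) h

lemma Dv_nonneg {x y z : V → Bool} (hz : z = thrUpd G b y) (i : V) :
    0 ≤ Dv G b x y z i := by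
  by_cases h : z i = x i
  · rw [Dv_zero G b y h]
  · linarith [Dv_one G b hz h]

/-- start bound -/
lemma start_le (x : V → Bool) (i : V) :
    Wv G b x (thrUpd G b x) i ≤ 2 * bt G b i - 1 := by
  rw [Wv]
  have hb0 := bt_nonneg G b i
  cases hy : thrUpd G b x i
  · have hs : sN G x i ≤ bt G b i - 1 := thr_false_bt' G b hy
    have h0 := sN_nonneg G x i
    cases hx : x i <;> simp [bi, hx, hy] <;> linarith
  · have hs : bt G b i ≤ sN G x i := thr_true_bt G b hy
    cases hx : x i <;> simp [bi, hx, hy] <;> linarith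

/-- global lower bound -/
lemma Wv_lower (x y : V → Bool) (i : V) :
    -2 * (G.degree i : ℤ) - 2 ≤ Wv G b x y i := by
  rw [Wv]
  have h0 := sN_nonneg G x i
  have h1 := sN_le_deg G x i
  have hb0 := bt_nonneg G b i
  have hb1 := bt_le G b i
  cases hx : x i <;> cases hy : y i <;> simp [bi, hx, hy] <;> linarith

/-- end bound, non-constant vertex -/
lemma end_main {p q : V → Bool} (hq : q = thrUpd G b p) {i : V}
    (hbge : 1 ≤ bt G b i) (hbt : bt G b i ≤ (G.degree i : ℤ)) :
    2 * bt G b i - 1 - 2 * (G.degree i : ℤ) ≤ Wv G b p q i := by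
  rw [Wv]
  have h0 := sN_nonneg G p i
  have h1 := sN_le_deg G p i
  have hb0 := bt_nonneg G b i
  cases hqi : q i
  · cases hp : p i <;> simp [bi, hp, hqi] <;> linarith
  · cases hp : p i <;> simp [bi, hp, hqi] <;> linarith

/-- end bound, constant-0 vertex -/
lemma end_one {p q : V → Bool} (hq : q = thrUpd G b p) {i : V}
    (hbt : bt G b i = (G.degree i : ℤ) + 1) :
    0 ≤ Wv G b p q i := by
  have hqi : q i = false := by
    cases hqi : q i
    · rfl
    · have := thr_true_bt G b (hq ▸ hqi)
      have := sN_le_deg G p i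
      omega
  rw [Wv, hqi]
  have hb0 := bt_nonneg G b i
  cases hp : p i <;> simp [bi, hp, hqi] <;> linarith

/-- constant vertices have frozen value -/
lemma const_lo {i : V} (h : bt G b i = 0) (x : V → Bool) : thrUpd G b x i = true := by
  have h1 := sN_nonneg G x i
  have h2 := sN_le_deg G x i
  rw [show (thrUpd G b x i = true ↔ b i ≤ sN G x i) by simp [thrUpd, sN, bi]]
  unfold bt at h; omega

lemma const_hi {i : V} (h : bt G b i = (G.degree i : ℤ) + 1) (x : V → Bool) :
    thrUpd G b x i = false := by
  cases hx : thrUpd G b x i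
  · rfl
  · have := thr_true_bt G b hx
    have := sN_le_deg G x i
    omega


section Traj

variable (x0 : V → Bool)

/-- the trajectory -/
def X (t : ℕ) : V → Bool := (thrUpd G b)^[t] x0

lemma X_succ (t : ℕ) : X G b x0 (t+1) = thrUpd G b (X G b x0 t) :=
  Function.iterate_succ_apply' _ _ _

lemma X_add (k t : ℕ) : X G b x0 (t + k) = (thrUpd G b)^[k] (X G b x0 t) := by
  rw [X, X, add_comm, Function.iterate_add_apply]

/-- per-step potential drop -/
def dW (t : ℕ) : ℤ :=
  W G b (X G b x0 t) (X G b x0 (t+1)) - W G b (X G b x0 (t+1)) (X G b x0 (t+2))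

lemma dW_eq (t : ℕ) :
    dW G b x0 t = ∑ i, Dv G b (X G b x0 t) (X G b x0 (t+1)) (X G b x0 (t+2)) i :=
  drop_eq G b _ _ _

lemma X2_eq (t : ℕ) : X G b x0 (t+2) = thrUpd G b (X G b x0 (t+1)) := X_succ G b x0 (t+1)

lemma dW_ge_one {t : ℕ} (h : X G b x0 (t+2) ≠ X G b x0 t) : 1 ≤ dW G b x0 t := by
  obtain ⟨i, hi⟩ := Function.ne_iff.mp h
  rw [dW_eq]
  have h1 : 1 ≤ Dv G b (X G b x0 t) (X G b x0 (t+1)) (X G b x0 (t+2)) i :=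
    Dv_one G b (X2_eq G b x0 t) hi
  have h0 : ∀ j ∈ Finset.univ, 0 ≤ Dv G b (X G b x0 t) (X G b x0 (t+1)) (X G b x0 (t+2)) j :=
    fun j _ => Dv_nonneg G b (X2_eq G b x0 t) j
  calc (1:ℤ) ≤ _ := h1
    _ ≤ _ := Finset.single_le_sum h0 (Finset.mem_univ i)

lemma dW_solo {t : ℕ} (h : dW G b x0 t = 1) {i j : V}
    (hi : X G b x0 (t+2) i ≠ X G b x0 t i) (hj : X G b x0 (t+2) j ≠ X G b x0 t j) :
    i = j := by
  by_contra hne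
  have h2 : (2:ℤ) ≤ dW G b x0 t := by
    rw [dW_eq]
    have hpair : Dv G b (X G b x0 t) (X G b x0 (t+1)) (X G b x0 (t+2)) i
        + Dv G b (X G b x0 t) (X G b x0 (t+1)) (X G b x0 (t+2)) j
        = ∑ k ∈ ({i, j} : Finset V), Dv G b (X G b x0 t) (X G b x0 (t+1)) (X G b x0 (t+2)) k :=
      (Finset.sum_pair hne).symm
    have hsub : ∑ k ∈ ({i, j} : Finset V), Dv G b (X G b x0 t) (X G b x0 (t+1)) (X G b x0 (t+2)) k
        ≤ ∑ k, Dv G b (X G b x0 t) (X G b x0 (t+1)) (X G b x0 (t+2)) k :=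
      Finset.sum_le_sum_of_subset_of_nonneg (Finset.subset_univ _)
        (fun k _ _ => Dv_nonneg G b (X2_eq G b x0 t) k)
    have hI := Dv_one G b (X2_eq G b x0 t) hi
    have hJ := Dv_one G b (X2_eq G b x0 t) hj
    omega
  omega

/-- a light (solo) step is the vertex's last change at its parity -/
lemma light_parity {t t' : ℕ} {i : V} (hlt : t < t') (hpar : t % 2 = t' % 2)
    (hsolo : ∀ j, X G b x0 (t+2) j ≠ X G b x0 t j → j = i)
    (hchg : X G b x0 (t+2) i ≠ X G b x0 t i)
    (hchg' : X G b x0 (t'+2) i ≠ X G b x0 t' i) : False := by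
  obtain ⟨r, hr⟩ : ∃ r, t' = t + 2 + 2*r := ⟨(t' - t)/2 - 1, by omega⟩
  have hunch : ∀ j, j ≠ i → X G b x0 (t+2) j = X G b x0 t j := by
    intro j hji
    by_contra hne
    exact hji (hsolo j hne)
  cases hup : X G b x0 (t+2) i
  · -- i went down at t : trajectory decreasing afterwards
    have hord : ∀ j, X G b x0 (t+2) j = true → X G b x0 t j = true := by
      intro j hj
      by_cases hji : j = i
      · rw [hji, hup] at hj; exact absurd hj (by simp)
      · rw [← hunch j hji]; exact hj
    have hmono : ∀ k j, X G b x0 (t+2+k) j = true → X G b x0 (t+k) j = true := by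
      intro k
      have e1 : X G b x0 (t+2+k) = (thrUpd G b)^[k] (X G b x0 (t+2)) := X_add G b x0 k (t+2)
      have e2 : X G b x0 (t+k) = (thrUpd G b)^[k] (X G b x0 t) := X_add G b x0 k t
      rw [e1, e2]
      exact iter_mono G b hord k
    have hfreeze : ∀ r, X G b x0 (t+2+2*r) i = false := by
      intro r
      induction r with
      | zero => simpa using hup
      | succ r ih =>
        cases hc : X G b x0 (t+2+2*(r+1)) i
        · rfl
        · have h1 : X G b x0 (t+(2*(r+1))) i = true := by
            apply hmono (2*(r+1)) i
            rw [show t+2+2*(r+1) = t+2+2*(r+1) from rfl]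
            exact hc
          rw [show t + 2*(r+1) = t+2+2*r by ring] at h1
          rw [ih] at h1
          exact absurd h1 (by simp)
    have hv1 : X G b x0 t' i = false := by rw [hr]; exact hfreeze r
    have hv2 : X G b x0 (t'+2) i = false := by
      rw [hr, show t+2+2*r+2 = t+2+2*(r+1) by ring]; exact hfreeze (r+1)
    rw [hv1, hv2] at hchg'; exact hchg' rfl
  · -- i went up at t : trajectory increasing afterwards
    have hord : ∀ j, X G b x0 t j = true → X G b x0 (t+2) j = true := by
      intro j hj
      by_cases hji : j = i
      · rw [hji, hup]
      · rw [hunch j hji]; exact hj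
    have hmono : ∀ k j, X G b x0 (t+k) j = true → X G b x0 (t+2+k) j = true := by
      intro k
      have e1 : X G b x0 (t+2+k) = (thrUpd G b)^[k] (X G b x0 (t+2)) := X_add G b x0 k (t+2)
      have e2 : X G b x0 (t+k) = (thrUpd G b)^[k] (X G b x0 t) := X_add G b x0 k t
      rw [e1, e2]
      exact iter_mono G b hord k
    have hfreeze : ∀ r, X G b x0 (t+2+2*r) i = true := by
      intro r
      induction r with
      | zero => simpa using hup
      | succ r ih =>
        have h1 : X G b x0 (t+2+2*(r+1)) i = true := by
          have := hmono (2*(r+1)) i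
          rw [show t + 2*(r+1) = t+2+2*r by ring] at this
          exact this ih
        exact h1
    have hv1 : X G b x0 t' i = true := by rw [hr]; exact hfreeze r
    have hv2 : X G b x0 (t'+2) i = true := by
      rw [hr, show t+2+2*r+2 = t+2+2*(r+1) by ring]; exact hfreeze (r+1)
    rw [hv1, hv2] at hchg'; exact hchg' rfl

end Traj

end ThrProof

open ThrProof in
/-- Main convergence bound for reversible threshold spread: from every initial
adoption vector, within `2|E| + |V|` time steps the trajectory converges to a cycle
of length at most 2. -/
theorem convergence_bound_reversible_threshold {V : Type*} [Fintype V] [DecidableEq V]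
    (G : SimpleGraph V) [DecidableRel G.Adj] (b : V → ℤ) (x0 : V → Bool) :
    ∃ t ≤ 2 * G.edgeFinset.card + Fintype.card V,
      (thrUpd G b)^[t + 2] x0 = (thrUpd G b)^[t] x0 ∧
        ∀ s ≥ t, (thrUpd G b)^[s + 2] x0 = (thrUpd G b)^[s] x0 := by
  classical
  set f : ℕ → ℤ := fun t => W G b (X G b x0 t) (X G b x0 (t+1)) with hf
  have hdWf : ∀ t, dW G b x0 t = f t - f (t+1) := fun t => rfl
  -- existence of a period-2 time
  have hex : ∃ t : ℕ, X G b x0 (t+2) = X G b x0 t := by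
    by_contra hc
    push_neg at hc
    have hdec : ∀ t : ℕ, f (t+1) ≤ f t - 1 := by
      intro t
      have h1 := dW_ge_one G b x0 (hc t)
      rw [hdWf t] at h1
      omega
    have hlin : ∀ t : ℕ, f t ≤ f 0 - t := by
      intro t
      induction t with
      | zero => simp
      | succ t ih =>
        have := hdec t
        have hcast : ((t+1 : ℕ) : ℤ) = (t : ℤ) + 1 := by push_cast; ring
        omega
    set B : ℤ := ∑ i : V, (-2 * (G.degree i : ℤ) - 2) with hB
    have hlow : ∀ t, B ≤ f t := fun t =>
      Finset.sum_le_sum (fun i _ => Wv_lower G b _ _ i)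
    have h1 := hlin (f 0 - B + 1).toNat
    have h2 := hlow (f 0 - B + 1).toNat
    have h3 : (f 0 - B + 1) ≤ (((f 0 - B + 1).toNat : ℕ) : ℤ) := Int.self_le_toNat _
    omega
  set T := Nat.find hex with hTdef
  have hT : X G b x0 (T+2) = X G b x0 T := Nat.find_spec hex
  have hmin : ∀ t < T, X G b x0 (t+2) ≠ X G b x0 t := fun t ht => Nat.find_min hex ht
  -- the light steps and their fibers
  set L : Finset ℕ := (Finset.range T).filter (fun t => dW G b x0 t = 1) with hL
  set Li : V → Finset ℕ :=
    fun i => L.filter (fun t => X G b x0 (t+2) i ≠ X G b x0 t i) with hLi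
  -- step accounting
  have step1 : ∀ t ∈ Finset.range T,
      (4:ℤ) ≤ 2 * dW G b x0 t + (if dW G b x0 t = 1 then (2:ℤ) else 0) := by
    intro t ht
    have h1 := dW_ge_one G b x0 (hmin t (Finset.mem_range.mp ht))
    by_cases h : dW G b x0 t = 1
    · rw [if_pos h, h]; norm_num
    · rw [if_neg h]; omega
  have sum1 : (4:ℤ) * T ≤ ∑ t ∈ Finset.range T,
      (2 * dW G b x0 t + (if dW G b x0 t = 1 then (2:ℤ) else 0)) := by
    calc (4:ℤ) * T = ∑ _t ∈ Finset.range T, (4:ℤ) := by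
          rw [Finset.sum_const, Finset.card_range, nsmul_eq_mul]; ring
      _ ≤ _ := Finset.sum_le_sum step1
  have sum2 : ∑ t ∈ Finset.range T,
      (2 * dW G b x0 t + (if dW G b x0 t = 1 then (2:ℤ) else 0))
      = 2 * (f 0 - f T) + 2 * (L.card : ℤ) := by
    rw [Finset.sum_add_distrib, ← Finset.mul_sum]
    congr 1
    · congr 1
      calc ∑ t ∈ Finset.range T, dW G b x0 t
          = ∑ t ∈ Finset.range T, (f t - f (t+1)) :=
            Finset.sum_congr rfl (fun t _ => hdWf t)
        _ = f 0 - f T := Finset.sum_range_sub' f T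
    · rw [← Finset.sum_filter, Finset.sum_const, nsmul_eq_mul, ← hL]; ring
  -- fiber bounds
  have cardL : (L.card : ℤ) ≤ ∑ i : V, ((Li i).card : ℤ) := by
    have hsub : L ⊆ Finset.univ.biUnion Li := by
      intro t ht
      have hact := hmin t (Finset.mem_range.mp (Finset.mem_filter.mp ht).1)
      obtain ⟨i, hi⟩ := Function.ne_iff.mp hact
      exact Finset.mem_biUnion.mpr ⟨i, Finset.mem_univ i,
        Finset.mem_filter.mpr ⟨ht, hi⟩⟩
    have h1 : L.card ≤ ∑ i : V, (Li i).card :=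
      le_trans (Finset.card_le_card hsub) (Finset.card_biUnion_le)
    exact_mod_cast h1
  have fib2 : ∀ i : V, (Li i).card ≤ 2 := by
    intro i
    have h : (Li i).card ≤ (Finset.range 2).card := by
      apply Finset.card_le_card_of_injOn (fun t => t % 2)
      · intro t ht
        exact Finset.mem_range.mpr (Nat.mod_lt _ (by norm_num))
      · intro t1 h1 t2 h2 heq
        by_contra hne
        simp only [hLi, hL, Finset.mem_coe, Finset.mem_filter] at h1 h2
        obtain ⟨⟨_, hd1⟩, hchg1⟩ := h1
        obtain ⟨⟨_, hd2⟩, hchg2⟩ := h2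
        rcases lt_or_gt_of_ne hne with hlt | hlt
        · exact light_parity G b x0 hlt heq
            (fun j hj => dW_solo G b x0 hd1 hj hchg1) hchg1 hchg2
        · exact light_parity G b x0 hlt heq.symm
            (fun j hj => dW_solo G b x0 hd2 hj hchg2) hchg2 hchg1
    simpa using h
  have fibconst : ∀ i : V, (bt G b i = 0 ∨ bt G b i = (G.degree i : ℤ) + 1) →
      (Li i).card ≤ 1 := by
    intro i hconst
    have hfrozen : ∀ s : ℕ, X G b x0 (s+1) i = X G b x0 1 i := by
      intro s
      rcases hconst with h0 | h1
      · rw [X_succ, const_lo G b h0, X_succ, const_lo G b h0]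
      · rw [X_succ, const_hi G b h1, X_succ, const_hi G b h1]
    have hsub : Li i ⊆ {0} := by
      intro t ht
      simp only [hLi, Finset.mem_filter] at ht
      obtain ⟨_, hchg⟩ := ht
      cases t with
      | zero => exact Finset.mem_singleton.mpr rfl
      | succ s =>
        exfalso
        apply hchg
        rw [show s + 1 + 2 = (s + 2) + 1 by ring, hfrozen (s+2), hfrozen s]
    simpa using Finset.card_le_card hsub
  -- per-vertex bound
  have pervertex : ∀ i : V,
      2 * (Wv G b (X G b x0 0) (X G b x0 1) i - Wv G b (X G b x0 T) (X G b x0 (T+1)) i)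
        + 2 * ((Li i).card : ℤ) ≤ 4 * (G.degree i : ℤ) + 4 := by
    intro i
    have hX1 : X G b x0 1 = thrUpd G b (X G b x0 0) := X_succ G b x0 0
    have hstart : Wv G b (X G b x0 0) (X G b x0 1) i ≤ 2 * bt G b i - 1 := by
      rw [hX1]; exact start_le G b _ i
    have hq : X G b x0 (T+1) = thrUpd G b (X G b x0 T) := X_succ G b x0 T
    have hb0 := bt_nonneg G b i
    have hb1 := bt_le G b i
    by_cases hc0 : bt G b i = 0
    · have hend := Wv_lower G b (X G b x0 T) (X G b x0 (T+1)) i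
      have hfib : ((Li i).card : ℤ) ≤ 1 := by exact_mod_cast fibconst i (Or.inl hc0)
      omega
    · by_cases hc1 : bt G b i = (G.degree i : ℤ) + 1
      · have hend := end_one G b hq hc1
        have hfib : ((Li i).card : ℤ) ≤ 1 := by exact_mod_cast fibconst i (Or.inr hc1)
        omega
      · have hend := end_main G b hq (i := i) (by omega) (by omega)
        have hfib : ((Li i).card : ℤ) ≤ 2 := by exact_mod_cast fib2 i
        omega
  -- global sum
  have hW0 : f 0 = ∑ i, Wv G b (X G b x0 0) (X G b x0 1) i := rfl
  have hWT : f T = ∑ i, Wv G b (X G b x0 T) (X G b x0 (T+1)) i := rfl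
  have hsumdeg : ∑ i : V, (G.degree i : ℤ) = 2 * (G.edgeFinset.card : ℤ) := by
    have := G.sum_degrees_eq_twice_card_edges
    exact_mod_cast congrArg (Nat.cast : ℕ → ℤ) this
  have final : (4:ℤ) * T ≤ 4 * (2 * (G.edgeFinset.card : ℤ) + (Fintype.card V : ℤ)) := by
    have hchain : (4:ℤ) * T ≤ 2 * (f 0 - f T) + 2 * (L.card : ℤ) := by
      rw [← sum2]; exact sum1
    have hsplit : 2 * (f 0 - f T) + 2 * (∑ i : V, ((Li i).card : ℤ))
        = ∑ i : V, (2 * (Wv G b (X G b x0 0) (X G b x0 1) i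
            - Wv G b (X G b x0 T) (X G b x0 (T+1)) i) + 2 * ((Li i).card : ℤ)) := by
      rw [hW0, hWT, ← Finset.sum_sub_distrib, Finset.mul_sum, Finset.mul_sum,
        ← Finset.sum_add_distrib]
    have hsum : ∑ i : V, (2 * (Wv G b (X G b x0 0) (X G b x0 1) i
            - Wv G b (X G b x0 T) (X G b x0 (T+1)) i) + 2 * ((Li i).card : ℤ))
        ≤ ∑ i : V, (4 * (G.degree i : ℤ) + 4) := Finset.sum_le_sum (fun i _ => pervertex i)
    have hrhs : ∑ i : V, (4 * (G.degree i : ℤ) + 4)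
        = 4 * (2 * (G.edgeFinset.card : ℤ) + (Fintype.card V : ℤ)) := by
      rw [Finset.sum_add_distrib, ← Finset.mul_sum, hsumdeg, Finset.sum_const,
        Finset.card_univ, nsmul_eq_mul]
      ring
    calc (4:ℤ) * T ≤ 2 * (f 0 - f T) + 2 * (L.card : ℤ) := hchain
      _ ≤ 2 * (f 0 - f T) + 2 * (∑ i : V, ((Li i).card : ℤ)) := by linarith [cardL]
      _ = _ := hsplit
      _ ≤ _ := hsum
      _ = _ := hrhs
  have hTbound : T ≤ 2 * G.edgeFinset.card + Fintype.card V := by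
    have : (T : ℤ) ≤ ((2 * G.edgeFinset.card + Fintype.card V : ℕ) : ℤ) := by
      push_cast
      linarith
    exact_mod_cast this
  -- conclusion
  have hstepk : ∀ k : ℕ, X G b x0 (T + k + 2) = X G b x0 (T + k) := by
    intro k
    induction k with
    | zero => simpa using hT
    | succ k ih =>
      have e1 : T + (k+1) + 2 = (T + k + 2) + 1 := by ring
      have e2 : T + (k+1) = (T + k) + 1 := by ring
      rw [e1, e2, X_succ G b x0 (T + k + 2), X_succ G b x0 (T + k), ih]
  refine ⟨T, hTbound, hT, ?_⟩
  intro s hs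
  obtain ⟨k, rfl⟩ := Nat.exists_eq_add_of_le hs
  exact hstepk k
end

section
/- (The long-term average adoption rate is well defined.) For every initial adoption vector x(0) ∈ {0,1}^V, the limit lim_{t→∞} Σ_{i∈V} (1/2)·(x_i(t) + x_i(t+1)) exists, where x(t) := F^t(x(0)). Moreover this limit is attained for all t ≥ 2|E| + |V|: the quantity Σ_{i∈V} (1/2)(x_i(t) + x_i(t+1)) is constant for t ≥ 2|E| + |V|. -/
open Finset

/-- An adoption vector regarded as a real vector. -/
def toR {V : Type*} (x : V → Bool) : V → ℝ := fun i => if x i then 1 else 0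

set_option linter.unusedSectionVars false

section Aux

variable {V : Type*} [Fintype V] [DecidableEq V] (G : SimpleGraph V) [DecidableRel G.Adj]

/-- A Boolean as an integer. -/
def bitZ (c : Bool) : ℤ := if c then 1 else 0

lemma bitZ_nonneg (c : Bool) : 0 ≤ bitZ c := by cases c <;> simp [bitZ]

lemma bitZ_le_one (c : Bool) : bitZ c ≤ 1 := by cases c <;> simp [bitZ]

/-- Number of adopting neighbors, as an integer. -/
def nbrZ (y : V → Bool) (i : V) : ℤ := ∑ j ∈ G.neighborFinset i, bitZ (y j)

variable (b : V → ℤ)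

lemma thrUpd_true (y : V → Bool) (i : V) :
    thrUpd G b y i = true ↔ b i ≤ nbrZ G y i := by
  simp only [thrUpd, decide_eq_true_eq]
  exact Iff.rfl

lemma thrUpd_false (y : V → Bool) (i : V) :
    thrUpd G b y i = false ↔ nbrZ G y i < b i := by
  simp only [thrUpd, decide_eq_false_iff_not, not_le]
  exact Iff.rfl

lemma nbrZ_nonneg (y : V → Bool) (i : V) : 0 ≤ nbrZ G y i :=
  Finset.sum_nonneg fun j _ => bitZ_nonneg (y j)

lemma nbrZ_le_degree (y : V → Bool) (i : V) : nbrZ G y i ≤ (G.degree i : ℤ) := by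
  calc nbrZ G y i ≤ ∑ _j ∈ G.neighborFinset i, (1 : ℤ) :=
        Finset.sum_le_sum fun j _ => bitZ_le_one (y j)
    _ = ((G.neighborFinset i).card : ℤ) := by
        rw [Finset.sum_const, nsmul_eq_mul, mul_one]
    _ = (G.degree i : ℤ) := by
        rw [SimpleGraph.card_neighborFinset_eq_degree]

/-- Symmetry of the interaction sum. -/
lemma nbr_symm (u v : V → Bool) :
    ∑ i, bitZ (u i) * nbrZ G v i = ∑ i, bitZ (v i) * nbrZ G u i := by
  unfold nbrZ
  simp_rw [Finset.mul_sum]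
  have key : ∀ (f : V → V → ℤ),
      ∑ i, ∑ j ∈ G.neighborFinset i, f i j = ∑ j, ∑ i ∈ G.neighborFinset j, f i j := by
    intro f
    simp_rw [SimpleGraph.neighborFinset_eq_filter, Finset.sum_filter]
    rw [Finset.sum_comm]
    refine Finset.sum_congr rfl fun j _ => Finset.sum_congr rfl fun i _ => ?_
    by_cases h : G.Adj i j
    · have h' : G.Adj j i := h.symm
      simp [h, h']
    · have h' : ¬ G.Adj j i := fun hh => h hh.symm
      simp [h, h']
  rw [key (fun i j => bitZ (u i) * bitZ (v j))]
  exact Finset.sum_congr rfl fun j _ => Finset.sum_congr rfl fun i _ => mul_comm _ _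

/-- The Lyapunov function. -/
def phiE (θ : V → ℤ) (y : V → Bool) : ℤ :=
  ∑ i, (min 0 (θ i - nbrZ G y i) + θ i * bitZ (y i))

variable (θ : V → ℤ) (hθl : ∀ i, b i - 1 ≤ θ i) (hθu : ∀ i, θ i ≤ b i)

include hθl hθu in
lemma min_eq_bit (y : V → Bool) (i : V) :
    min 0 (θ i - nbrZ G y i) = bitZ (thrUpd G b y i) * (θ i - nbrZ G y i) := by
  by_cases h : b i ≤ nbrZ G y i
  · have ht : thrUpd G b y i = true := (thrUpd_true G b y i).mpr h
    rw [ht]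
    have : θ i - nbrZ G y i ≤ 0 := by have := hθu i; linarith
    rw [min_eq_right this]
    simp [bitZ]
  · have ht : thrUpd G b y i = false := by
      rw [thrUpd_false]; exact lt_of_not_ge h
    rw [ht]
    have : 0 ≤ θ i - nbrZ G y i := by
      have h1 := hθl i
      have h2 : nbrZ G y i < b i := lt_of_not_ge h
      linarith
    rw [min_eq_left this]
    simp [bitZ]

include hθl hθu in
/-- Key algebraic identity for the change of the Lyapunov function. -/
lemma phi_delta (y : V → Bool) :
    phiE G θ (thrUpd G b y) - phiE G θ y
      = -∑ i, (bitZ (thrUpd G b (thrUpd G b y) i) - bitZ (y i))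
          * (nbrZ G (thrUpd G b y) i - θ i) := by
  have h1 : phiE G θ (thrUpd G b y)
      = ∑ i, (bitZ (thrUpd G b (thrUpd G b y) i) * (θ i - nbrZ G (thrUpd G b y) i)
              + θ i * bitZ (thrUpd G b y i)) :=
    Finset.sum_congr rfl fun i _ => by rw [min_eq_bit G b θ hθl hθu (thrUpd G b y) i]
  have h2 : phiE G θ y
      = ∑ i, (bitZ (thrUpd G b y i) * (θ i - nbrZ G y i) + θ i * bitZ (y i)) :=
    Finset.sum_congr rfl fun i _ => by rw [min_eq_bit G b θ hθl hθu y i]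
  rw [h1, h2, ← Finset.sum_sub_distrib]
  have split : ∑ i, ((bitZ (thrUpd G b (thrUpd G b y) i) * (θ i - nbrZ G (thrUpd G b y) i)
              + θ i * bitZ (thrUpd G b y i))
        - (bitZ (thrUpd G b y i) * (θ i - nbrZ G y i) + θ i * bitZ (y i)))
      = ∑ i, (-((bitZ (thrUpd G b (thrUpd G b y) i) - bitZ (y i))
            * (nbrZ G (thrUpd G b y) i - θ i))
          + (bitZ (thrUpd G b y i) * nbrZ G y i - bitZ (y i) * nbrZ G (thrUpd G b y) i)) :=
    Finset.sum_congr rfl fun i _ => by ring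
  rw [split, Finset.sum_add_distrib, Finset.sum_sub_distrib, nbr_symm G (thrUpd G b y) y,
    sub_self, add_zero]
  rw [Finset.sum_neg_distrib]

include hθl hθu in
lemma term_nonneg_s14 (y : V → Bool) (i : V) :
    0 ≤ (bitZ (thrUpd G b (thrUpd G b y) i) - bitZ (y i)) * (nbrZ G (thrUpd G b y) i - θ i) := by
  cases h2 : thrUpd G b (thrUpd G b y) i with
  | false =>
    have hn : nbrZ G (thrUpd G b y) i < b i := (thrUpd_false G b _ i).mp h2
    cases h0 : y i with
    | false => simp [bitZ]
    | true =>
      have h1 := hθl i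
      simp only [bitZ, h2, h0]
      norm_num
      nlinarith
  | true =>
    have hn : b i ≤ nbrZ G (thrUpd G b y) i := (thrUpd_true G b _ i).mp h2
    cases h0 : y i with
    | false =>
      have h1 := hθu i
      simp only [bitZ, h2, h0]
      norm_num
      nlinarith
    | true => simp [bitZ]

include hθl hθu in
lemma phi_mono (y : V → Bool) : phiE G θ (thrUpd G b y) ≤ phiE G θ y := by
  have hd := phi_delta G b θ hθl hθu y
  have hs : 0 ≤ ∑ i, (bitZ (thrUpd G b (thrUpd G b y) i) - bitZ (y i))
      * (nbrZ G (thrUpd G b y) i - θ i) :=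
    Finset.sum_nonneg fun i _ => term_nonneg_s14 G b θ hθl hθu y i
  linarith

/-- Strict decrease of the up-counting Lyapunov function at an up-flip. -/
lemma phi_up_step (y : V → Bool) (i0 : V)
    (h2 : thrUpd G b (thrUpd G b y) i0 = true) (h0 : y i0 = false) :
    phiE G (fun i => b i - 1) (thrUpd G b y) + 1 ≤ phiE G (fun i => b i - 1) y := by
  have hθl : ∀ i, b i - 1 ≤ (fun i => b i - 1) i := fun i => le_refl _
  have hθu : ∀ i, (fun i => b i - 1) i ≤ b i := fun i => by simp
  have hd := phi_delta G b _ hθl hθu y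
  have hterm : (1 : ℤ) ≤ (bitZ (thrUpd G b (thrUpd G b y) i0) - bitZ (y i0))
      * (nbrZ G (thrUpd G b y) i0 - (b i0 - 1)) := by
    have hn : b i0 ≤ nbrZ G (thrUpd G b y) i0 := (thrUpd_true G b _ i0).mp h2
    simp only [bitZ, h2, h0]
    norm_num
    linarith
  have hs : (1 : ℤ) ≤ ∑ i, (bitZ (thrUpd G b (thrUpd G b y) i) - bitZ (y i))
      * (nbrZ G (thrUpd G b y) i - (b i - 1)) :=
    le_trans hterm (Finset.single_le_sum
      (f := fun i => (bitZ (thrUpd G b (thrUpd G b y) i) - bitZ (y i))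
        * (nbrZ G (thrUpd G b y) i - (b i - 1)))
      (fun i _ => term_nonneg_s14 G b _ hθl hθu y i) (Finset.mem_univ i0))
  linarith

/-- Strict decrease of the down-counting Lyapunov function at a down-flip. -/
lemma phi_down_step (y : V → Bool) (i0 : V)
    (h2 : thrUpd G b (thrUpd G b y) i0 = false) (h0 : y i0 = true) :
    phiE G b (thrUpd G b y) + 1 ≤ phiE G b y := by
  have hθl : ∀ i, b i - 1 ≤ b i := fun i => by simp
  have hθu : ∀ i, b i ≤ b i := fun i => le_refl _
  have hd := phi_delta G b b hθl hθu y
  have hterm : (1 : ℤ) ≤ (bitZ (thrUpd G b (thrUpd G b y) i0) - bitZ (y i0))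
      * (nbrZ G (thrUpd G b y) i0 - b i0) := by
    have hn : nbrZ G (thrUpd G b y) i0 < b i0 := (thrUpd_false G b _ i0).mp h2
    simp only [bitZ, h2, h0]
    norm_num
    linarith
  have hs : (1 : ℤ) ≤ ∑ i, (bitZ (thrUpd G b (thrUpd G b y) i) - bitZ (y i))
      * (nbrZ G (thrUpd G b y) i - b i) :=
    le_trans hterm (Finset.single_le_sum
      (f := fun i => (bitZ (thrUpd G b (thrUpd G b y) i) - bitZ (y i))
        * (nbrZ G (thrUpd G b y) i - b i))
      (fun i _ => term_nonneg_s14 G b b hθl hθu y i) (Finset.mem_univ i0))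
  linarith

include hθl hθu in
/-- Per-node bound: on states in the image of the update map, the per-node
contribution to the Lyapunov function varies by at most the degree. -/
lemma g_bound (y z : V → Bool) (i : V) :
    (min 0 (θ i - nbrZ G (thrUpd G b y) i) + θ i * bitZ (thrUpd G b y i))
      - (min 0 (θ i - nbrZ G (thrUpd G b z) i) + θ i * bitZ (thrUpd G b z i))
      ≤ (G.degree i : ℤ) := by
  have hny0 := nbrZ_nonneg G (thrUpd G b y) i
  have hnyd := nbrZ_le_degree G (thrUpd G b y) i
  have hnz0 := nbrZ_nonneg G (thrUpd G b z) i
  have hnzd := nbrZ_le_degree G (thrUpd G b z) i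
  have hl := hθl i
  have hu := hθu i
  by_cases hb0 : b i ≤ 0
  · have hY : thrUpd G b y i = true :=
      (thrUpd_true G b y i).mpr (le_trans hb0 (nbrZ_nonneg G y i))
    have hZ : thrUpd G b z i = true :=
      (thrUpd_true G b z i).mpr (le_trans hb0 (nbrZ_nonneg G z i))
    rw [hY, hZ]
    have hmy : min 0 (θ i - nbrZ G (thrUpd G b y) i) = θ i - nbrZ G (thrUpd G b y) i :=
      min_eq_right (by linarith)
    have hmz : min 0 (θ i - nbrZ G (thrUpd G b z) i) = θ i - nbrZ G (thrUpd G b z) i :=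
      min_eq_right (by linarith)
    rw [hmy, hmz]
    simp only [bitZ]
    norm_num
    linarith
  · by_cases hb1 : (G.degree i : ℤ) + 1 ≤ b i
    · have hY : thrUpd G b y i = false := by
        rw [thrUpd_false]
        have := nbrZ_le_degree G y i
        linarith
      have hZ : thrUpd G b z i = false := by
        rw [thrUpd_false]
        have := nbrZ_le_degree G z i
        linarith
      rw [hY, hZ]
      have hmy : min 0 (θ i - nbrZ G (thrUpd G b y) i) = 0 :=
        min_eq_left (by linarith)
      have hmz : min 0 (θ i - nbrZ G (thrUpd G b z) i) = 0 :=
        min_eq_left (by linarith)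
      rw [hmy, hmz]
      have hd0 : (0 : ℤ) ≤ (G.degree i : ℤ) := by positivity
      simpa [bitZ] using hd0
    · push_neg at hb0 hb1
      have hb0' : (1 : ℤ) ≤ b i := hb0
      have hbd : b i ≤ (G.degree i : ℤ) := by linarith
      have hup : min 0 (θ i - nbrZ G (thrUpd G b y) i) + θ i * bitZ (thrUpd G b y i) ≤ θ i := by
        have h1 : min 0 (θ i - nbrZ G (thrUpd G b y) i) ≤ 0 := min_le_left _ _
        have h2 : θ i * bitZ (thrUpd G b y i) ≤ θ i := by
          cases h : thrUpd G b y i <;> simp [bitZ] <;> linarith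
        linarith
      have hlow : θ i - (G.degree i : ℤ)
          ≤ min 0 (θ i - nbrZ G (thrUpd G b z) i) + θ i * bitZ (thrUpd G b z i) := by
        have h1 : θ i - (G.degree i : ℤ) ≤ min 0 (θ i - nbrZ G (thrUpd G b z) i) :=
          le_min (by linarith) (by linarith)
        have h2 : 0 ≤ θ i * bitZ (thrUpd G b z i) :=
          mul_nonneg (by linarith) (bitZ_nonneg _)
        linarith
      linarith

include hθl hθu in
lemma phi_width (y z : V → Bool) :
    phiE G θ (thrUpd G b y) - phiE G θ (thrUpd G b z)
      ≤ 2 * (G.edgeFinset.card : ℤ) := by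
  unfold phiE
  rw [← Finset.sum_sub_distrib]
  have h1 : ∑ i, ((min 0 (θ i - nbrZ G (thrUpd G b y) i) + θ i * bitZ (thrUpd G b y i))
      - (min 0 (θ i - nbrZ G (thrUpd G b z) i) + θ i * bitZ (thrUpd G b z i)))
      ≤ ∑ i, (G.degree i : ℤ) :=
    Finset.sum_le_sum fun i _ => g_bound G b θ hθl hθu y z i
  have h2 : ∑ i, (G.degree i : ℤ) = 2 * (G.edgeFinset.card : ℤ) := by
    have h := SimpleGraph.sum_degrees_eq_twice_card_edges G
    exact_mod_cast congrArg (Nat.cast : ℕ → ℤ) h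
  linarith

end Aux

section Dyn

variable {V : Type*} [Fintype V] [DecidableEq V] (G : SimpleGraph V) [DecidableRel G.Adj]
  (b : V → ℤ) (x0 : V → Bool)

lemma Xs (t : ℕ) :
    (thrUpd G b)^[t + 1] x0 = thrUpd G b ((thrUpd G b)^[t] x0) :=
  Function.iterate_succ_apply' _ _ _

/-- Crossing lemma, upward direction: an up-flip at time `t+1` requires an
up-flip at time `t`. -/
lemma up_chain (t : ℕ) (i : V)
    (h2 : (thrUpd G b)^[t + 3] x0 i = true)
    (h0 : (thrUpd G b)^[t + 1] x0 i = false) :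
    ∃ j, (thrUpd G b)^[t + 2] x0 j = true ∧ (thrUpd G b)^[t] x0 j = false := by
  rw [show t + 3 = (t + 2) + 1 from rfl, Xs, thrUpd_true] at h2
  rw [Xs, thrUpd_false] at h0
  by_contra hc
  push_neg at hc
  have hmono : nbrZ G ((thrUpd G b)^[t + 2] x0) i ≤ nbrZ G ((thrUpd G b)^[t] x0) i := by
    apply Finset.sum_le_sum
    intro j _
    cases hj2 : (thrUpd G b)^[t + 2] x0 j with
    | false => simp [bitZ, hj2]; exact bitZ_nonneg _
    | true =>
      have hj0 : (thrUpd G b)^[t] x0 j ≠ false := hc j hj2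
      have hj0' : (thrUpd G b)^[t] x0 j = true := by
        cases h : (thrUpd G b)^[t] x0 j
        · exact absurd h hj0
        · rfl
      simp [bitZ, hj2, hj0']
  linarith

/-- Crossing lemma, downward direction. -/
lemma down_chain (t : ℕ) (i : V)
    (h2 : (thrUpd G b)^[t + 3] x0 i = false)
    (h0 : (thrUpd G b)^[t + 1] x0 i = true) :
    ∃ j, (thrUpd G b)^[t + 2] x0 j = false ∧ (thrUpd G b)^[t] x0 j = true := by
  rw [show t + 3 = (t + 2) + 1 from rfl, Xs, thrUpd_false] at h2
  rw [Xs, thrUpd_true] at h0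
  by_contra hc
  push_neg at hc
  have hmono : nbrZ G ((thrUpd G b)^[t] x0) i ≤ nbrZ G ((thrUpd G b)^[t + 2] x0) i := by
    apply Finset.sum_le_sum
    intro j _
    cases hj0 : (thrUpd G b)^[t] x0 j with
    | false => simp [bitZ, hj0]; exact bitZ_nonneg _
    | true =>
      have hj2 : (thrUpd G b)^[t + 2] x0 j ≠ false := fun hh => (hc j hh) hj0
      have hj2' : (thrUpd G b)^[t + 2] x0 j = true := by
        cases h : (thrUpd G b)^[t + 2] x0 j
        · exact absurd h hj2
        · rfl
      simp [bitZ, hj0, hj2']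
  linarith

lemma up_prop (t : ℕ) : ∀ m : ℕ,
    (∃ i, (thrUpd G b)^[t + m + 2] x0 i = true ∧ (thrUpd G b)^[t + m] x0 i = false) →
    ∃ j, (thrUpd G b)^[t + 2] x0 j = true ∧ (thrUpd G b)^[t] x0 j = false := by
  intro m
  induction m with
  | zero => exact fun h => h
  | succ k ih =>
    rintro ⟨i, h2, h0⟩
    exact ih (up_chain G b x0 (t + k) i h2 h0)

lemma down_prop (t : ℕ) : ∀ m : ℕ,
    (∃ i, (thrUpd G b)^[t + m + 2] x0 i = false ∧ (thrUpd G b)^[t + m] x0 i = true) →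
    ∃ j, (thrUpd G b)^[t + 2] x0 j = false ∧ (thrUpd G b)^[t] x0 j = true := by
  intro m
  induction m with
  | zero => exact fun h => h
  | succ k ih =>
    rintro ⟨i, h2, h0⟩
    exact ih (down_chain G b x0 (t + k) i h2 h0)

lemma up_count (s : ℕ)
    (h : ∀ r, r < s →
      ∃ i, (thrUpd G b)^[r + 3] x0 i = true ∧ (thrUpd G b)^[r + 1] x0 i = false) :
    (s : ℤ) ≤ 2 * (G.edgeFinset.card : ℤ) := by
  set θ : V → ℤ := fun i => b i - 1 with hθ
  have hθl : ∀ i, b i - 1 ≤ θ i := fun i => le_refl _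
  have hθu : ∀ i, θ i ≤ b i := fun i => by simp [hθ]
  have hstep : ∀ r, r < s →
      phiE G θ ((thrUpd G b)^[r + 2] x0) + 1 ≤ phiE G θ ((thrUpd G b)^[r + 1] x0) := by
    intro r hr
    obtain ⟨i, h2, h0⟩ := h r hr
    have h2' : thrUpd G b (thrUpd G b ((thrUpd G b)^[r + 1] x0)) i = true := by
      rw [← Xs, ← Xs]; exact h2
    have := phi_up_step G b ((thrUpd G b)^[r + 1] x0) i h2' h0
    rw [← Xs] at this
    exact this
  have key : ∀ r, r ≤ s →
      phiE G θ ((thrUpd G b)^[r + 1] x0) + (r : ℤ) ≤ phiE G θ ((thrUpd G b)^[1] x0) := by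
    intro r
    induction r with
    | zero => intro _; simp
    | succ k ih =>
      intro hks
      have h1 := hstep k (by omega)
      have h2 := ih (by omega)
      push_cast
      push_cast at h2
      have : k + 1 + 1 = k + 2 := rfl
      rw [this]
      linarith
  have hkey := key s le_rfl
  have hw : phiE G θ ((thrUpd G b)^[1] x0) - phiE G θ ((thrUpd G b)^[s + 1] x0)
      ≤ 2 * (G.edgeFinset.card : ℤ) := by
    have h1 : (thrUpd G b)^[1] x0 = thrUpd G b x0 := rfl
    have h2 : (thrUpd G b)^[s + 1] x0 = thrUpd G b ((thrUpd G b)^[s] x0) := Xs G b x0 s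
    rw [h1, h2]
    exact phi_width G b θ hθl hθu x0 ((thrUpd G b)^[s] x0)
  linarith

lemma down_count (s : ℕ)
    (h : ∀ r, r < s →
      ∃ i, (thrUpd G b)^[r + 3] x0 i = false ∧ (thrUpd G b)^[r + 1] x0 i = true) :
    (s : ℤ) ≤ 2 * (G.edgeFinset.card : ℤ) := by
  have hθl : ∀ i, b i - 1 ≤ b i := fun i => by simp
  have hθu : ∀ i, b i ≤ b i := fun i => le_refl _
  have hstep : ∀ r, r < s →
      phiE G b ((thrUpd G b)^[r + 2] x0) + 1 ≤ phiE G b ((thrUpd G b)^[r + 1] x0) := by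
    intro r hr
    obtain ⟨i, h2, h0⟩ := h r hr
    have h2' : thrUpd G b (thrUpd G b ((thrUpd G b)^[r + 1] x0)) i = false := by
      rw [← Xs, ← Xs]; exact h2
    have := phi_down_step G b ((thrUpd G b)^[r + 1] x0) i h2' h0
    rw [← Xs] at this
    exact this
  have key : ∀ r, r ≤ s →
      phiE G b ((thrUpd G b)^[r + 1] x0) + (r : ℤ) ≤ phiE G b ((thrUpd G b)^[1] x0) := by
    intro r
    induction r with
    | zero => intro _; simp
    | succ k ih =>
      intro hks
      have h1 := hstep k (by omega)
      have h2 := ih (by omega)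
      push_cast
      push_cast at h2
      have : k + 1 + 1 = k + 2 := rfl
      rw [this]
      linarith
  have hkey := key s le_rfl
  have hw : phiE G b ((thrUpd G b)^[1] x0) - phiE G b ((thrUpd G b)^[s + 1] x0)
      ≤ 2 * (G.edgeFinset.card : ℤ) := by
    have h1 : (thrUpd G b)^[1] x0 = thrUpd G b x0 := rfl
    have h2 : (thrUpd G b)^[s + 1] x0 = thrUpd G b ((thrUpd G b)^[s] x0) := Xs G b x0 s
    rw [h1, h2]
    exact phi_width G b b hθl hθu x0 ((thrUpd G b)^[s] x0)
  linarith

/-- Any flip happens at a step at most `2 |E|`. -/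
lemma flip_le (t : ℕ) (i : V)
    (hne : (thrUpd G b)^[t + 2] x0 i ≠ (thrUpd G b)^[t] x0 i) :
    t ≤ 2 * G.edgeFinset.card := by
  cases h2 : (thrUpd G b)^[t + 2] x0 i with
  | true =>
    have h0 : (thrUpd G b)^[t] x0 i = false := by
      cases h : (thrUpd G b)^[t] x0 i
      · rfl
      · rw [h2, h] at hne; exact absurd rfl hne
    have hall : ∀ r, r < t →
        ∃ j, (thrUpd G b)^[r + 3] x0 j = true ∧ (thrUpd G b)^[r + 1] x0 j = false := by
      intro r hr
      have e : r + 1 + (t - (r + 1)) = t := by omega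
      apply up_prop G b x0 (r + 1) (t - (r + 1))
      rw [e]
      exact ⟨i, h2, h0⟩
    exact_mod_cast up_count G b x0 t hall
  | false =>
    have h0 : (thrUpd G b)^[t] x0 i = true := by
      cases h : (thrUpd G b)^[t] x0 i
      · rw [h2, h] at hne; exact absurd rfl hne
      · rfl
    have hall : ∀ r, r < t →
        ∃ j, (thrUpd G b)^[r + 3] x0 j = false ∧ (thrUpd G b)^[r + 1] x0 j = true := by
      intro r hr
      have e : r + 1 + (t - (r + 1)) = t := by omega
      apply down_prop G b x0 (r + 1) (t - (r + 1))
      rw [e]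
      exact ⟨i, h2, h0⟩
    exact_mod_cast down_count G b x0 t hall

/-- Eventual 2-periodicity from step `2|E| + |V|` on. -/
lemma periodic (t : ℕ) (ht : 2 * G.edgeFinset.card + Fintype.card V ≤ t) :
    (thrUpd G b)^[t + 2] x0 = (thrUpd G b)^[t] x0 := by
  by_contra h
  obtain ⟨i, hi⟩ := Function.ne_iff.mp h
  have h1 : t ≤ 2 * G.edgeFinset.card := flip_le G b x0 t i hi
  have h2 : 1 ≤ Fintype.card V := Fintype.card_pos_iff.mpr ⟨i⟩
  omega

end Dyn

/-- The long-term average adoption rate is well defined: the limit of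
`∑_i (1/2)(x_i(t) + x_i(t+1))` exists and is attained for all `t ≥ 2|E| + |V|`. -/
theorem long_term_average_adoption_well_defined {V : Type*} [Fintype V] [DecidableEq V]
    (G : SimpleGraph V) [DecidableRel G.Adj] (b : V → ℤ) (x0 : V → Bool) :
    ∃ L : ℝ,
      Filter.Tendsto
        (fun t => ∑ i, (1 / 2 : ℝ) *
          (toR ((thrUpd G b)^[t] x0) i + toR ((thrUpd G b)^[t + 1] x0) i))
        Filter.atTop (nhds L) ∧
      ∀ t ≥ 2 * G.edgeFinset.card + Fintype.card V,
        (∑ i, (1 / 2 : ℝ) *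
          (toR ((thrUpd G b)^[t] x0) i + toR ((thrUpd G b)^[t + 1] x0) i)) = L := by
  set N := 2 * G.edgeFinset.card + Fintype.card V with hN
  set q : ℕ → ℝ := fun t => ∑ i, (1 / 2 : ℝ) *
    (toR ((thrUpd G b)^[t] x0) i + toR ((thrUpd G b)^[t + 1] x0) i) with hq
  have hconst : ∀ t, N ≤ t → q t = q N := by
    intro t ht
    induction t, ht using Nat.le_induction with
    | base => rfl
    | succ n hn ih =>
      have hper : (thrUpd G b)^[n + 2] x0 = (thrUpd G b)^[n] x0 :=
        periodic G b x0 n hn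
      have : q (n + 1) = q n := by
        simp only [hq]
        rw [show n + 1 + 1 = n + 2 from rfl, hper]
        exact Finset.sum_congr rfl fun i _ => by ring
      rw [this, ih]
  refine ⟨q N, ?_, fun t ht => hconst t ht⟩
  exact tendsto_atTop_of_eventually_const hconst
end

section
/- (Fixed-duration intervention convergence bound.) Let S ⊆ V be a seed set and let d ≥ 1. Consider the fixed-duration process: x(0) is arbitrary with x(0)_i = 1 for i ∈ S, the forced update F_S (which sets seeds to 1 and applies the threshold rule elsewhere) is applied for time steps 1,...,d−1, and the free update F is applied at all time steps t ≥ d. Then within d + 2|E| + |V| time steps the adoption vector converges to a cycle of length at most 2: there exists t ≤ d + 2|E| + |V| with x(t+2) = x(t). -/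
open Finset

/-- The forced update with seed set `S`: seeds are forced to Behavior 1 and all other
nodes apply the threshold rule. -/
def forcedUpd {V : Type*} [Fintype V] [DecidableEq V] (G : SimpleGraph V)
    [DecidableRel G.Adj] (b : V → ℤ) (S : Finset V) (x : V → Bool) : V → Bool :=
  fun i => if i ∈ S then true else thrUpd G b x i

/-- The fixed-duration process: starting from `x0`, the forced update `F_S` produces
the adoption vectors at time steps `1, ..., d - 1`, and the free update `F` is applied
at all time steps `t ≥ d`. -/
def fdTraj {V : Type*} [Fintype V] [DecidableEq V] (G : SimpleGraph V)
    [DecidableRel G.Adj] (b : V → ℤ) (S : Finset V) (d : ℕ) (x0 : V → Bool) :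
    ℕ → (V → Bool)
  | 0 => x0
  | t + 1 =>
    if t + 1 ≤ d - 1 then forcedUpd G b S (fdTraj G b S d x0 t)
    else thrUpd G b (fdTraj G b S d x0 t)

namespace FDICaux

variable {V : Type*} [Fintype V] [DecidableEq V] (G : SimpleGraph V) [DecidableRel G.Adj]
  (b : V → ℤ)

/-- Number of active neighbors. -/
def nn (x : V → Bool) (i : V) : ℤ := ∑ j ∈ G.neighborFinset i, (if x j then (1 : ℤ) else 0)

/-- 0/1 indicator of a Boolean configuration. -/
def chb (x : V → Bool) (i : V) : ℤ := if x i then 1 else 0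

/-- Clamped thresholds. -/
def bhat (i : V) : ℤ :=
  if b i < 0 then 0 else if (G.degree i : ℤ) + 1 < b i then (G.degree i : ℤ) + 1 else b i

/-- Goles-type energy of a pair of consecutive configurations. -/
def En (c : V → ℤ) (x y : V → Bool) : ℤ :=
  ∑ i, (c i * chb x i + chb y i * (c i - nn G x i))

lemma chb01 (x : V → Bool) (i : V) : chb x i = 0 ∨ chb x i = 1 := by
  unfold chb; by_cases h : x i <;> simp [h]

lemma nn_nonneg (x : V → Bool) (i : V) : 0 ≤ nn G x i := by
  unfold nn
  apply Finset.sum_nonneg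
  intro j _; by_cases h : x j <;> simp [h]

lemma nn_le (x : V → Bool) (i : V) : nn G x i ≤ (G.degree i : ℤ) := by
  unfold nn
  rw [← SimpleGraph.card_neighborFinset_eq_degree]
  calc ∑ j ∈ G.neighborFinset i, (if x j then (1 : ℤ) else 0)
      ≤ ∑ _j ∈ G.neighborFinset i, (1 : ℤ) := by
        apply Finset.sum_le_sum; intro j _; by_cases h : x j <;> simp [h]
    _ = ((G.neighborFinset i).card : ℤ) := by simp

lemma bhat_nonneg (i : V) : 0 ≤ bhat G b i := by
  unfold bhat
  have : (0 : ℤ) ≤ (G.degree i : ℤ) := Int.natCast_nonneg _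
  split_ifs <;> omega

lemma bhat_le (i : V) : bhat G b i ≤ (G.degree i : ℤ) + 1 := by
  unfold bhat
  split_ifs <;> omega

lemma thr_true_iff (v : V → Bool) (i : V) :
    thrUpd G b v i = true ↔ bhat G b i ≤ nn G v i := by
  have h1 := nn_nonneg G v i
  have h2 := nn_le G v i
  unfold thrUpd
  rw [decide_eq_true_eq]
  show b i ≤ nn G v i ↔ bhat G b i ≤ nn G v i
  unfold bhat
  split_ifs <;> omega

lemma chb_thr (v : V → Bool) (i : V) :
    chb (thrUpd G b v) i = if bhat G b i ≤ nn G v i then 1 else 0 := by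
  unfold chb
  by_cases h : bhat G b i ≤ nn G v i
  · rw [if_pos ((thr_true_iff G b v i).mpr h), if_pos h]
  · rw [if_neg, if_neg h]
    intro hc
    exact h ((thr_true_iff G b v i).mp hc)

lemma nbr_sum_eq (f : V → V → ℤ) :
    ∑ i, ∑ j ∈ G.neighborFinset i, f i j = ∑ i, ∑ j, if G.Adj i j then f i j else 0 := by
  refine Finset.sum_congr rfl fun i _ => ?_
  rw [SimpleGraph.neighborFinset_eq_filter, Finset.sum_filter]

lemma swap_sum (x y : V → Bool) :
    ∑ i, chb y i * nn G x i = ∑ i, chb x i * nn G y i := by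
  have h : ∀ u w : V → Bool, ∑ i, chb w i * nn G u i
      = ∑ i, ∑ j, if G.Adj i j then chb w i * chb u j else 0 := by
    intro u w
    have := nbr_sum_eq G (fun i j => chb w i * chb u j)
    rw [← this]
    refine Finset.sum_congr rfl fun i _ => ?_
    unfold nn chb
    rw [Finset.mul_sum]
  rw [h x y, h y x, Finset.sum_comm]
  refine Finset.sum_congr rfl fun i _ => Finset.sum_congr rfl fun j _ => ?_
  refine if_congr (G.adj_comm j i) (mul_comm _ _) rfl

lemma En_diff (c : V → ℤ) (u v w : V → Bool) :
    En G c v w - En G c u v = ∑ i, (chb w i - chb u i) * (c i - nn G v i) := by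
  have h1 : En G c v w - En G c u v - (∑ i, (chb w i - chb u i) * (c i - nn G v i))
      = (∑ i, chb v i * nn G u i) - (∑ i, chb u i * nn G v i) := by
    unfold En
    rw [← Finset.sum_sub_distrib, ← Finset.sum_sub_distrib, ← Finset.sum_sub_distrib]
    exact Finset.sum_congr rfl fun i _ => by ring
  have h2 := swap_sum G u v
  linarith

/-- Energy with `c = bhat` drops by at least 1 at any step with a 1→0 flip. -/
lemma En_drop0 (u v : V → Bool) (i0 : V) (h1 : u i0 = true) (h2 : thrUpd G b v i0 = false) :
    En G (bhat G b) v (thrUpd G b v) ≤ En G (bhat G b) u v - 1 := by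
  have hdiff := En_diff G (bhat G b) u v (thrUpd G b v)
  have hbound : ∑ i, (chb (thrUpd G b v) i - chb u i) * (bhat G b i - nn G v i)
      ≤ ∑ i, (if i = i0 then (-1 : ℤ) else 0) := by
    apply Finset.sum_le_sum
    intro i _
    have hn1 := nn_nonneg G v i
    have hn2 := nn_le G v i
    have hb1 := bhat_nonneg G b i
    have hb2 := bhat_le G b i
    rw [chb_thr]
    by_cases hi : i = i0
    · subst hi
      rw [if_pos rfl]
      have hW : ¬ bhat G b i ≤ nn G v i := by
        intro hc
        rw [(thr_true_iff G b v i).mpr hc] at h2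
        exact Bool.noConfusion h2
      rw [if_neg hW]
      unfold chb
      rw [if_pos h1]
      ring_nf
      omega
    · rw [if_neg hi]
      rcases chb01 u i with hU | hU <;> rw [hU] <;>
        by_cases hW : bhat G b i ≤ nn G v i <;>
          simp only [if_pos, if_neg, hW, if_true, if_false] <;> ring_nf <;> omega
  have hsum : ∑ i, (if i = i0 then (-1 : ℤ) else 0) = -1 := by
    rw [Finset.sum_ite_eq' Finset.univ i0 (fun _ => (-1 : ℤ))]
    simp
  omega

/-- Energy with `c = bhat - 1` drops by at least 1 at any step with a 0→1 flip. -/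
lemma En_drop1 (u v : V → Bool) (i0 : V) (h1 : u i0 = false) (h2 : thrUpd G b v i0 = true) :
    En G (fun i => bhat G b i - 1) v (thrUpd G b v)
      ≤ En G (fun i => bhat G b i - 1) u v - 1 := by
  have hdiff := En_diff G (fun i => bhat G b i - 1) u v (thrUpd G b v)
  have hbound : ∑ i, (chb (thrUpd G b v) i - chb u i) * ((bhat G b i - 1) - nn G v i)
      ≤ ∑ i, (if i = i0 then (-1 : ℤ) else 0) := by
    apply Finset.sum_le_sum
    intro i _
    have hn1 := nn_nonneg G v i
    have hn2 := nn_le G v i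
    have hb1 := bhat_nonneg G b i
    have hb2 := bhat_le G b i
    rw [chb_thr]
    by_cases hi : i = i0
    · subst hi
      rw [if_pos rfl]
      have hW : bhat G b i ≤ nn G v i := (thr_true_iff G b v i).mp h2
      rw [if_pos hW]
      unfold chb
      rw [if_neg (by rw [h1]; exact Bool.false_ne_true)]
      ring_nf
      omega
    · rw [if_neg hi]
      rcases chb01 u i with hU | hU <;> rw [hU] <;>
        by_cases hW : bhat G b i ≤ nn G v i <;>
          simp only [if_pos, if_neg, hW, if_true, if_false] <;> ring_nf <;> omega
  have hsum : ∑ i, (if i = i0 then (-1 : ℤ) else 0) = -1 := by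
    rw [Finset.sum_ite_eq' Finset.univ i0 (fun _ => (-1 : ℤ))]
    simp
  omega

/-- Any two on-trajectory energies differ by at most `∑ (deg + 1)`. -/
lemma En_pair_bound (c : V → ℤ)
    (hc : (∀ i, c i = bhat G b i) ∨ (∀ i, c i = bhat G b i - 1)) (u u' : V → Bool) :
    En G c u' (thrUpd G b u') - En G c u (thrUpd G b u)
      ≤ ∑ i, ((G.degree i : ℤ) + 1) := by
  unfold En
  rw [← Finset.sum_sub_distrib]
  apply Finset.sum_le_sum
  intro i _
  have hn1 := nn_nonneg G u i
  have hn2 := nn_le G u i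
  have hn1' := nn_nonneg G u' i
  have hn2' := nn_le G u' i
  have hb1 := bhat_nonneg G b i
  have hb2 := bhat_le G b i
  rw [chb_thr, chb_thr]
  have hci : c i = bhat G b i ∨ c i = bhat G b i - 1 := by
    rcases hc with hc | hc
    · exact Or.inl (hc i)
    · exact Or.inr (hc i)
  rcases chb01 u i with hU | hU <;> rw [hU] <;>
    rcases chb01 u' i with hU' | hU' <;> rw [hU'] <;>
      by_cases hW : bhat G b i ≤ nn G u i <;>
        by_cases hW' : bhat G b i ≤ nn G u' i <;>
          simp only [if_pos, if_neg, hW, hW', if_true, if_false] <;> ring_nf <;> omega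

/-- Monotonicity of the threshold update. -/
lemma thr_mono (x y : V → Bool) (h : ∀ i, x i = true → y i = true) :
    ∀ i, thrUpd G b x i = true → thrUpd G b y i = true := by
  intro i hx
  rw [thr_true_iff] at hx ⊢
  refine le_trans hx ?_
  unfold nn
  apply Finset.sum_le_sum
  intro j _
  by_cases hj : x j
  · rw [if_pos hj, if_pos (h j hj)]
  · rw [if_neg hj]
    by_cases hj' : y j <;> simp [hj']

end FDICaux

/-- Fixed-duration intervention convergence bound: for any seed set `S`, duration
`d ≥ 1`, and initial vector `x0` with the seeds at Behavior 1, within `d + 2|E| + |V|`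
time steps the adoption vector converges to a cycle of length at most 2. -/
theorem fixed_duration_intervention_convergence {V : Type*} [Fintype V] [DecidableEq V]
    (G : SimpleGraph V) [DecidableRel G.Adj] (b : V → ℤ) (S : Finset V) (d : ℕ)
    (hd : 1 ≤ d) (x0 : V → Bool) (hx0 : ∀ i ∈ S, x0 i = true) :
    ∃ t ≤ d + 2 * G.edgeFinset.card + Fintype.card V,
      fdTraj G b S d x0 (t + 2) = fdTraj G b S d x0 t := by
  classical
  by_contra hcon
  push_neg at hcon
  set N : ℕ := 2 * G.edgeFinset.card + Fintype.card V with hN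
  set y : ℕ → V → Bool := fun k => fdTraj G b S d x0 (d - 1 + k) with hy
  -- all steps of `y` are free threshold updates
  have hstep : ∀ k, y (k + 1) = thrUpd G b (y k) := by
    intro k
    show fdTraj G b S d x0 (d - 1 + (k + 1)) = thrUpd G b (fdTraj G b S d x0 (d - 1 + k))
    have h1 : d - 1 + (k + 1) = (d - 1 + k) + 1 := by omega
    rw [h1]
    rw [fdTraj]
    rw [if_neg (by omega)]
  -- all relevant steps are "bad"
  have hbad : ∀ k, k ≤ N + 1 → y (k + 2) ≠ y k := by
    intro k hk
    have h2 : d - 1 + (k + 2) = (d - 1 + k) + 2 := by omega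
    have h3 := hcon (d - 1 + k) (by omega)
    show fdTraj G b S d x0 (d - 1 + (k + 2)) ≠ fdTraj G b S d x0 (d - 1 + k)
    rw [h2]
    exact h3
  -- upward monotone propagation
  have hmono : ∀ a : ℕ, (∀ i, y a i = true → y (a + 2) i = true) →
      ∀ j, ∀ i, y (a + j) i = true → y (a + j + 2) i = true := by
    intro a ha j
    induction j with
    | zero => simpa using ha
    | succ j ih =>
      have e2 : a + (j + 1) + 2 = (a + j + 2) + 1 := by omega
      have e1 : a + (j + 1) = (a + j) + 1 := by omega
      rw [e2, e1, hstep (a + j), hstep (a + j + 2)]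
      exact FDICaux.thr_mono G b _ _ ih
  -- downward monotone propagation
  have hmono' : ∀ a : ℕ, (∀ i, y (a + 2) i = true → y a i = true) →
      ∀ j, ∀ i, y (a + 2 + j) i = true → y (a + j) i = true := by
    intro a ha j
    induction j with
    | zero => simpa using ha
    | succ j ih =>
      have e1 : a + 2 + (j + 1) = (a + 2 + j) + 1 := by omega
      have e2 : a + (j + 1) = (a + j) + 1 := by omega
      rw [e1, e2, hstep (a + 2 + j), hstep (a + j)]
      exact FDICaux.thr_mono G b _ _ ih
  -- generic descent contradiction
  have hval : (∑ i, ((G.degree i : ℤ) + 1)) = (N : ℤ) := by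
    rw [Finset.sum_add_distrib, Finset.sum_const, Finset.card_univ, nsmul_eq_mul, mul_one]
    have h2m := G.sum_degrees_eq_twice_card_edges
    have hcast : (∑ i, ((G.degree i : ℤ))) = ((∑ i, G.degree i : ℕ) : ℤ) := by
      rw [Nat.cast_sum]
    rw [hcast, h2m, hN]
    push_cast
    ring
  have descend : ∀ c : V → ℤ,
      ((∀ i, c i = FDICaux.bhat G b i) ∨ (∀ i, c i = FDICaux.bhat G b i - 1)) →
      (∀ k, k ≤ N + 1 →
        FDICaux.En G c (y (k + 1)) (y (k + 2)) ≤ FDICaux.En G c (y k) (y (k + 1)) - 1) →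
      False := by
    intro c hc hdrop
    have key : ∀ k, k ≤ N + 2 →
        FDICaux.En G c (y k) (y (k + 1)) ≤ FDICaux.En G c (y 0) (y 1) - (k : ℤ) := by
      intro k
      induction k with
      | zero => intro _; simp
      | succ k ih =>
        intro hk
        have h1 := ih (by omega)
        have e : (k + 1) + 1 = k + 2 := by omega
        rw [e]
        have h2 := hdrop k (by omega)
        push_cast
        linarith
    have hW := FDICaux.En_pair_bound G b c hc (y (N + 2)) (y 0)
    rw [← hstep 0, ← hstep (N + 2), hval] at hW
    have hK := key (N + 2) le_rfl
    have e : (N + 2) + 1 = N + 3 := by omega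
    rw [e] at hK
    have e2 : ((N : ℤ) + 2 + 1) = (N : ℤ) + 3 := by ring
    push_cast at hK
    -- hW : En (y 0) (y 1) - En (y (N+2)) (y (N+3)) ≤ N
    -- hK : En (y (N+2)) (y (N+3)) ≤ En (y 0) (y 1) - (N+2)
    have h01 : y (0 + 1) = y 1 := by norm_num
    rw [h01] at hW
    linarith
  -- case split
  by_cases hA : ∀ k, k ≤ N + 1 → ∃ i, y k i = true ∧ y (k + 2) i = false
  · refine descend (FDICaux.bhat G b) (Or.inl fun _ => rfl) ?_
    intro k hk
    obtain ⟨i0, h1, h2⟩ := hA k hk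
    have h3 : y (k + 2) = thrUpd G b (y (k + 1)) := by
      have := hstep (k + 1)
      rwa [show (k + 1) + 1 = k + 2 from by omega] at this
    rw [h3]
    apply FDICaux.En_drop0 G b (y k) (y (k + 1)) i0 h1
    rw [← h3]
    exact h2
  · push_neg at hA
    obtain ⟨k0, hk0, hkA⟩ := hA
    have hle0 : ∀ i, y k0 i = true → y (k0 + 2) i = true := by
      intro i hi
      have := hkA i hi
      simpa using this
    have hup : ∀ k, k ≤ N + 1 → ∃ i, y k i = false ∧ y (k + 2) i = true := by
      intro k hk
      rcases le_or_gt k0 k with h | h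
      · -- monotone up from k0
        have hm := hmono k0 hle0 (k - k0)
        rw [show k0 + (k - k0) = k from by omega] at hm
        have hb := hbad k hk
        by_contra hno
        push_neg at hno
        apply hb
        funext i
        cases hyk : y k i with
        | true => rw [hm i hyk]
        | false =>
          cases hyk2 : y (k + 2) i with
          | true => exact absurd hyk2 (hno i hyk)
          | false => rfl
      · -- if no up-flip at k < k0, trajectory is monotone down, contradicting badness at k0
        by_contra hno
        push_neg at hno
        have hled : ∀ i, y (k + 2) i = true → y k i = true := by
          intro i h2
          cases hyk : y k i with
          | true => rfl
          | false => exact absurd h2 (hno i hyk)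
        have hm := hmono' k hled (k0 - k)
        rw [show k + 2 + (k0 - k) = k0 + 2 from by omega,
            show k + (k0 - k) = k0 from by omega] at hm
        apply hbad k0 hk0
        funext i
        cases hyk : y k0 i with
        | true => rw [hle0 i hyk]
        | false =>
          cases hyk2 : y (k0 + 2) i with
          | true => rw [hm i hyk2] at hyk; exact absurd hyk (by simp)
          | false => rfl
    refine descend (fun i => FDICaux.bhat G b i - 1) (Or.inr fun _ => rfl) ?_
    intro k hk
    obtain ⟨i0, h1, h2⟩ := hup k hk
    have h3 : y (k + 2) = thrUpd G b (y (k + 1)) := by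
      have := hstep (k + 1)
      rwa [show (k + 1) + 1 = k + 2 from by omega] at this
    rw [h3]
    apply FDICaux.En_drop1 G b (y k) (y (k + 1)) i0 h1
    rw [← h3]
    exact h2
end
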